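/- arXiv:math/0512308 — 8 statements merged into one kernel-verified Lean document; each statement's English description precedes it below -/
import Mathlib

section
/- Let c ∈ {−1, 1}, let I, J ⊆ ℝ be open intervals, D = I × J, and let f : I → ℝ and g : J → ℝ be smooth with f(u) + g(v) nowhere zero and (1 + c f(u)²)(1 + c g(v)²) > 0 on D. Let ω, Q, R : D → ℝ be smooth, set H_c(u,v) = (1 − c f(u) g(v))/(f(u) + g(v)), H₀(u,v) = 1/(f(u) + g(v)), ω̃ = ω + log((1 + c f²)(1 + c g²)), Q̃ = (1 + c f²) Q, R̃ = (1 + c g²) R. Then (ω, Q, R, H_c) satisfies the Gauss equation (G_c) and the Codazzi equations (C_c) on D if and only if (ω̃, Q̃, R̃, H₀) satisfies (G₀) and (C₀) on D. -/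
open Matrix

noncomputable section

/-- Partial derivative in the first variable. -/
def pd1 (f : ℝ → ℝ → ℝ) (u v : ℝ) : ℝ := deriv (fun x => f x v) u

/-- Partial derivative in the second variable. -/
def pd2 (f : ℝ → ℝ → ℝ) (u v : ℝ) : ℝ := deriv (fun y => f u y) v

/-- The Gauss equation (G_c) at a point:
`ω_uv + (1/2)(H² + c)e^ω − 2QRe^{−ω} = 0`. -/
def GaussEq (c : ℝ) (ω Q R H : ℝ → ℝ → ℝ) (u v : ℝ) : Prop :=
  pd2 (pd1 ω) u v + (1 / 2) * ((H u v) ^ 2 + c) * Real.exp (ω u v)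
    - 2 * Q u v * R u v * Real.exp (-ω u v) = 0

/-- The Codazzi equations (C_c) at a point:
`H_u = 2e^{−ω}Q_v` and `H_v = 2e^{−ω}R_u`. -/
def CodazziEq (ω Q R H : ℝ → ℝ → ℝ) (u v : ℝ) : Prop :=
  pd1 H u v = 2 * Real.exp (-ω u v) * pd2 Q u v ∧
  pd2 H u v = 2 * Real.exp (-ω u v) * pd1 R u v

/-- Smoothness of a two-variable function on a set. -/
def Smooth2 (f : ℝ → ℝ → ℝ) (s : Set (ℝ × ℝ)) : Prop :=
  ContDiffOn ℝ (⊤ : ℕ∞) (fun p : ℝ × ℝ => f p.1 p.2) s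


lemma diffAt_fst {F : ℝ → ℝ → ℝ} {s : Set (ℝ×ℝ)} (h : Smooth2 F s) (hs : IsOpen s)
    {u v : ℝ} (hm : (u,v) ∈ s) : DifferentiableAt ℝ (fun x => F x v) u := by
  have h1 : DifferentiableAt ℝ (fun p : ℝ×ℝ => F p.1 p.2) (u,v) :=
    (h.contDiffAt (hs.mem_nhds hm)).differentiableAt (by simp)
  have := h1.comp u (DifferentiableAt.prodMk (differentiableAt_id (𝕜 := ℝ) (x := u)) (differentiableAt_const v))
  exact this

lemma diffAt_snd {F : ℝ → ℝ → ℝ} {s : Set (ℝ×ℝ)} (h : Smooth2 F s) (hs : IsOpen s)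
    {u v : ℝ} (hm : (u,v) ∈ s) : DifferentiableAt ℝ (fun y => F u y) v := by
  have h1 : DifferentiableAt ℝ (fun p : ℝ×ℝ => F p.1 p.2) (u,v) :=
    (h.contDiffAt (hs.mem_nhds hm)).differentiableAt (by simp)
  have := h1.comp v (DifferentiableAt.prodMk (differentiableAt_const u) (differentiableAt_id (𝕜 := ℝ) (x := v)))
  exact this

lemma gauss_alg (c p q W E E' x y : ℝ) (hs : p + q ≠ 0)
    (ha : 1 + c * p ^ 2 ≠ 0) (hb : 1 + c * q ^ 2 ≠ 0) :
    (W + 1 / 2 * (((1 - c * p * q) / (p + q)) ^ 2 + c) * E - 2 * x * y * E' = 0) ↔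
    (W + 1 / 2 * ((1 / (p + q)) ^ 2 + 0) * (E * ((1 + c * p ^ 2) * (1 + c * q ^ 2))) -
      2 * ((1 + c * p ^ 2) * x) * ((1 + c * q ^ 2) * y) *
        (E' / ((1 + c * p ^ 2) * (1 + c * q ^ 2))) = 0) := by
  have h : W + 1 / 2 * ((1 / (p + q)) ^ 2 + 0) * (E * ((1 + c * p ^ 2) * (1 + c * q ^ 2))) -
      2 * ((1 + c * p ^ 2) * x) * ((1 + c * q ^ 2) * y) *
        (E' / ((1 + c * p ^ 2) * (1 + c * q ^ 2)))
      = W + 1 / 2 * (((1 - c * p * q) / (p + q)) ^ 2 + c) * E - 2 * x * y * E' := by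
    rw [show 2 * ((1 + c * p ^ 2) * x) * ((1 + c * q ^ 2) * y) * (E' / ((1 + c * p ^ 2) * (1 + c * q ^ 2))) = 2 * x * y * E' by field_simp]
    field_simp
    ring
  rw [h]

lemma cod_alg (c p q df E' X : ℝ) (hs : p + q ≠ 0)
    (ha : 1 + c * p ^ 2 ≠ 0) (hb : 1 + c * q ^ 2 ≠ 0) :
    (((0 - c * df * q) * (p + q) - (1 - c * p * q) * df) / (p + q) ^ 2 = 2 * E' * X) ↔
    ((0 * (p + q) - 1 * df) / (p + q) ^ 2 =
      2 * (E' / ((1 + c * p ^ 2) * (1 + c * q ^ 2))) * ((1 + c * p ^ 2) * X)) := by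
  have e1 : ((0 - c * df * q) * (p + q) - (1 - c * p * q) * df) / (p + q) ^ 2
      = (1 + c * q ^ 2) * ((0 * (p + q) - 1 * df) / (p + q) ^ 2) := by field_simp; ring
  have e2 : 2 * E' * X
      = (1 + c * q ^ 2) * (2 * (E' / ((1 + c * p ^ 2) * (1 + c * q ^ 2))) * ((1 + c * p ^ 2) * X)) := by
    field_simp
  rw [e1, e2, mul_right_inj' hb]

lemma cod_alg2 (c p q dg E' X : ℝ) (hs : p + q ≠ 0)
    (ha : 1 + c * p ^ 2 ≠ 0) (hb : 1 + c * q ^ 2 ≠ 0) :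
    (((0 - c * p * dg) * (p + q) - (1 - c * p * q) * dg) / (p + q) ^ 2 = 2 * E' * X) ↔
    ((0 * (p + q) - 1 * dg) / (p + q) ^ 2 =
      2 * (E' / ((1 + c * p ^ 2) * (1 + c * q ^ 2))) * ((1 + c * q ^ 2) * X)) := by
  have e1 : ((0 - c * p * dg) * (p + q) - (1 - c * p * q) * dg) / (p + q) ^ 2
      = (1 + c * p ^ 2) * ((0 * (p + q) - 1 * dg) / (p + q) ^ 2) := by field_simp; ring
  have e2 : 2 * E' * X
      = (1 + c * p ^ 2) * (2 * (E' / ((1 + c * p ^ 2) * (1 + c * q ^ 2))) * ((1 + c * q ^ 2) * X)) := by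
    field_simp
  rw [e1, e2, mul_right_inj' ha]

/-- generalized Lawson correspondence, Theorem 6.4:
`(ω, Q, R, H_c)` satisfies (G_c) and (C_c) on `D = I × J` iff
`(ω̃, Q̃, R̃, H₀)` satisfies (G₀) and (C₀) on `D`, where
`H_c = (1 − cfg)/(f + g)`, `H₀ = 1/(f + g)`,
`ω̃ = ω + log((1 + cf²)(1 + cg²))`, `Q̃ = (1 + cf²)Q`, `R̃ = (1 + cg²)R`. -/
theorem statement0
    (c : ℝ) (hc : c = -1 ∨ c = 1)
    (I J : Set ℝ) (hIopen : IsOpen I) (hIint : I.OrdConnected)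
    (hJopen : IsOpen J) (hJint : J.OrdConnected)
    (f g : ℝ → ℝ)
    (hf : ContDiffOn ℝ (⊤ : ℕ∞) f I) (hg : ContDiffOn ℝ (⊤ : ℕ∞) g J)
    (hfg : ∀ u ∈ I, ∀ v ∈ J, f u + g v ≠ 0)
    (hpos : ∀ u ∈ I, ∀ v ∈ J, 0 < (1 + c * f u ^ 2) * (1 + c * g v ^ 2))
    (ω Q R : ℝ → ℝ → ℝ)
    (hω : Smooth2 ω (I ×ˢ J)) (hQ : Smooth2 Q (I ×ˢ J)) (hR : Smooth2 R (I ×ˢ J)) :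
    (∀ u ∈ I, ∀ v ∈ J,
        GaussEq c ω Q R (fun u v => (1 - c * f u * g v) / (f u + g v)) u v ∧
        CodazziEq ω Q R (fun u v => (1 - c * f u * g v) / (f u + g v)) u v) ↔
    (∀ u ∈ I, ∀ v ∈ J,
        GaussEq 0 (fun u v => ω u v + Real.log ((1 + c * f u ^ 2) * (1 + c * g v ^ 2)))
          (fun u v => (1 + c * f u ^ 2) * Q u v)
          (fun u v => (1 + c * g v ^ 2) * R u v)
          (fun u v => 1 / (f u + g v)) u v ∧
        CodazziEq (fun u v => ω u v + Real.log ((1 + c * f u ^ 2) * (1 + c * g v ^ 2)))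
          (fun u v => (1 + c * f u ^ 2) * Q u v)
          (fun u v => (1 + c * g v ^ 2) * R u v)
          (fun u v => 1 / (f u + g v)) u v) := by
  have hD : IsOpen (I ×ˢ J) := hIopen.prod hJopen
  have key : ∀ u ∈ I, ∀ v ∈ J,
      ((GaussEq c ω Q R (fun u v => (1 - c * f u * g v) / (f u + g v)) u v ∧
        CodazziEq ω Q R (fun u v => (1 - c * f u * g v) / (f u + g v)) u v) ↔
       (GaussEq 0 (fun u v => ω u v + Real.log ((1 + c * f u ^ 2) * (1 + c * g v ^ 2)))
          (fun u v => (1 + c * f u ^ 2) * Q u v)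
          (fun u v => (1 + c * g v ^ 2) * R u v)
          (fun u v => 1 / (f u + g v)) u v ∧
        CodazziEq (fun u v => ω u v + Real.log ((1 + c * f u ^ 2) * (1 + c * g v ^ 2)))
          (fun u v => (1 + c * f u ^ 2) * Q u v)
          (fun u v => (1 + c * g v ^ 2) * R u v)
          (fun u v => 1 / (f u + g v)) u v)) := by
    intro u hu v hv
    have hm : (u, v) ∈ I ×ˢ J := Set.mk_mem_prod hu hv
    have hfd : DifferentiableAt ℝ f u := (hf.contDiffAt (hIopen.mem_nhds hu)).differentiableAt (by simp)
    have hgd : DifferentiableAt ℝ g v := (hg.contDiffAt (hJopen.mem_nhds hv)).differentiableAt (by simp)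
    have hs : f u + g v ≠ 0 := hfg u hu v hv
    have hab : (0:ℝ) < (1 + c * f u ^ 2) * (1 + c * g v ^ 2) := hpos u hu v hv
    have ha : (1 + c * f u ^ 2) ≠ 0 := (mul_ne_zero_iff.mp hab.ne').1
    have hb : (1 + c * g v ^ 2) ≠ 0 := (mul_ne_zero_iff.mp hab.ne').2
    -- derivatives of the mean curvature functions
    have h1 : pd1 (fun u v => 1 / (f u + g v)) u v
        = (0 * (f u + g v) - 1 * deriv f u) / (f u + g v) ^ 2 :=
      ((hasDerivAt_const u (1:ℝ)).div (hfd.hasDerivAt.add_const (g v)) hs).deriv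
    have h2 : pd2 (fun u v => 1 / (f u + g v)) u v
        = (0 * (f u + g v) - 1 * deriv g v) / (f u + g v) ^ 2 :=
      ((hasDerivAt_const v (1:ℝ)).div (hgd.hasDerivAt.const_add (f u)) hs).deriv
    have h3 : pd1 (fun u v => (1 - c * f u * g v) / (f u + g v)) u v
        = ((0 - c * deriv f u * g v) * (f u + g v) - (1 - c * f u * g v) * deriv f u)
            / (f u + g v) ^ 2 :=
      (((hasDerivAt_const u (1:ℝ)).sub ((hfd.hasDerivAt.const_mul c).mul_const (g v))).div
        (hfd.hasDerivAt.add_const (g v)) hs).deriv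
    have h4 : pd2 (fun u v => (1 - c * f u * g v) / (f u + g v)) u v
        = ((0 - c * f u * deriv g v) * (f u + g v) - (1 - c * f u * g v) * deriv g v)
            / (f u + g v) ^ 2 :=
      (((hasDerivAt_const v (1:ℝ)).sub (hgd.hasDerivAt.const_mul (c * f u))).div
        (hgd.hasDerivAt.const_add (f u)) hs).deriv
    -- derivatives of Q̃, R̃
    have h5 : pd2 (fun u v => (1 + c * f u ^ 2) * Q u v) u v
        = (1 + c * f u ^ 2) * pd2 Q u v :=
      deriv_const_mul _ (diffAt_snd hQ hD hm)
    have h6 : pd1 (fun u v => (1 + c * g v ^ 2) * R u v) u v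
        = (1 + c * g v ^ 2) * pd1 R u v := by
      unfold pd1
      rw [show (fun x => (1 + c * g v ^ 2) * R x v) = fun x => (1 + c * g v ^ 2) * (fun x => R x v) x from rfl,
        deriv_const_mul _ (diffAt_fst hR hD hm)]
    -- second mixed derivative of ω̃
    have hA : ∀ y ∈ J, pd1 (fun u v => ω u v + Real.log ((1 + c * f u ^ 2) * (1 + c * g v ^ 2))) u y
        = pd1 ω u y + 2 * c * f u * deriv f u / (1 + c * f u ^ 2) := by
      intro y hy
      have hmy : (u, y) ∈ I ×ˢ J := Set.mk_mem_prod hu hy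
      have haby : (0:ℝ) < (1 + c * f u ^ 2) * (1 + c * g y ^ 2) := hpos u hu y hy
      have hby : (1 + c * g y ^ 2) ≠ 0 := (mul_ne_zero_iff.mp haby.ne').2
      have hωd : DifferentiableAt ℝ (fun x => ω x y) u := diffAt_fst hω hD hmy
      have hlog : HasDerivAt (fun x => Real.log ((1 + c * f x ^ 2) * (1 + c * g y ^ 2)))
          ((c * (↑2 * f u ^ (2-1) * deriv f u) * (1 + c * g y ^ 2))
            / ((1 + c * f u ^ 2) * (1 + c * g y ^ 2))) u :=
        ((((hfd.hasDerivAt.pow 2).const_mul c).const_add 1).mul_const (1 + c * g y ^ 2)).log haby.ne'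
      have : pd1 (fun u v => ω u v + Real.log ((1 + c * f u ^ 2) * (1 + c * g v ^ 2))) u y
          = pd1 ω u y + (c * (↑2 * f u ^ (2-1) * deriv f u) * (1 + c * g y ^ 2))
            / ((1 + c * f u ^ 2) * (1 + c * g y ^ 2)) := by
        unfold pd1
        exact deriv_add hωd hlog.differentiableAt |>.trans (by rw [hlog.deriv])
      rw [this]
      congr 1
      field_simp
      ring
    have h7 : pd2 (pd1 (fun u v => ω u v + Real.log ((1 + c * f u ^ 2) * (1 + c * g v ^ 2)))) u v
        = pd2 (pd1 ω) u v := by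
      unfold pd2
      have hev : (fun y => pd1 (fun u v => ω u v + Real.log ((1 + c * f u ^ 2) * (1 + c * g v ^ 2))) u y)
          =ᶠ[nhds v] (fun y => pd1 ω u y + 2 * c * f u * deriv f u / (1 + c * f u ^ 2)) := by
        filter_upwards [hJopen.mem_nhds hv] with y hy using hA y hy
      rw [hev.deriv_eq, deriv_add_const]
    -- exponential facts
    have hE : Real.exp (ω u v + Real.log ((1 + c * f u ^ 2) * (1 + c * g v ^ 2)))
        = Real.exp (ω u v) * ((1 + c * f u ^ 2) * (1 + c * g v ^ 2)) := by
      rw [Real.exp_add, Real.exp_log hab]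
    have hE' : Real.exp (-(ω u v + Real.log ((1 + c * f u ^ 2) * (1 + c * g v ^ 2))))
        = Real.exp (-ω u v) / ((1 + c * f u ^ 2) * (1 + c * g v ^ 2)) := by
      rw [neg_add, Real.exp_add, Real.exp_neg (Real.log _), Real.exp_log hab, Real.exp_neg,
        div_eq_mul_inv]
    have hGiff : GaussEq c ω Q R (fun u v => (1 - c * f u * g v) / (f u + g v)) u v ↔
        GaussEq 0 (fun u v => ω u v + Real.log ((1 + c * f u ^ 2) * (1 + c * g v ^ 2)))
          (fun u v => (1 + c * f u ^ 2) * Q u v)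
          (fun u v => (1 + c * g v ^ 2) * R u v)
          (fun u v => 1 / (f u + g v)) u v := by
      unfold GaussEq
      beta_reduce
      rw [h7, hE, hE']
      exact gauss_alg c (f u) (g v) (pd2 (pd1 ω) u v) (Real.exp (ω u v)) (Real.exp (-ω u v))
        (Q u v) (R u v) hs ha hb
    have hCiff : CodazziEq ω Q R (fun u v => (1 - c * f u * g v) / (f u + g v)) u v ↔
        CodazziEq (fun u v => ω u v + Real.log ((1 + c * f u ^ 2) * (1 + c * g v ^ 2)))
          (fun u v => (1 + c * f u ^ 2) * Q u v)
          (fun u v => (1 + c * g v ^ 2) * R u v)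
          (fun u v => 1 / (f u + g v)) u v := by
      unfold CodazziEq
      beta_reduce
      rw [h1, h2, h3, h4, h5, h6, hE']
      exact and_congr
        (cod_alg c (f u) (g v) (deriv f u) (Real.exp (-ω u v)) (pd2 Q u v) hs ha hb)
        (cod_alg2 c (f u) (g v) (deriv g v) (Real.exp (-ω u v)) (pd1 R u v) hs ha hb)
    exact and_congr hGiff hCiff
  constructor
  · intro h u hu v hv; exact (key u hu v hv).1 (h u hu v hv)
  · intro h u hu v hv; exact (key u hu v hv).2 (h u hu v hv)
end
end

section
/- Let I, J ⊆ ℝ be open intervals, D = I × J, and let f : I → ℝ and g : J → ℝ be smooth with f + g nowhere zero on D; set H(u,v) = 1/(f(u) + g(v)). Let τ ∈ ℝ be such that 1 + 2τf(u) ≠ 0 and 1 − 2τg(v) ≠ 0 on D, and set λ(u,v) = (1 − 2τg(v))/(1 + 2τf(u)). Suppose smooth ω, Q, R : D → ℝ satisfy the Gauss equation (G₀) and the Codazzi equations (C₀) with mean curvature H. Then the 2×2 real matrix-valued functions U_λ = [[−ω_u/4, −Q e^{−ω/2}], [(H/2) λ e^{ω/2}, ω_u/4]] and V_λ = [[ω_v/4,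 −(H/2) λ^{−1} e^{ω/2}], [R e^{−ω/2}, −ω_v/4]] satisfy the zero curvature equation ∂_u V_λ − ∂_v U_λ + (U_λ V_λ − V_λ U_λ) = 0 on D. -/
set_option maxHeartbeats 1000000

open Topology


open Matrix

noncomputable section

/-- Entrywise derivative of a matrix-valued function of a real variable. -/
def mderiv (f : ℝ → Matrix (Fin 2) (Fin 2) ℝ) (x : ℝ) : Matrix (Fin 2) (Fin 2) ℝ :=
  Matrix.of fun i j => deriv (fun t => f t i j) x

/-- The matrix `U_λ` of the Lax pair with variable spectral parameter. -/
def Umat (ω Q H lam : ℝ → ℝ → ℝ) (u v : ℝ) : Matrix (Fin 2) (Fin 2) ℝ :=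
  !![-(pd1 ω u v) / 4, -(Q u v) * Real.exp (-(ω u v) / 2);
     (H u v / 2) * lam u v * Real.exp (ω u v / 2), (pd1 ω u v) / 4]

/-- The matrix `V_λ` of the Lax pair with variable spectral parameter. -/
def Vmat (ω R H lam : ℝ → ℝ → ℝ) (u v : ℝ) : Matrix (Fin 2) (Fin 2) ℝ :=
  !![(pd2 ω u v) / 4, -(H u v / 2) * (lam u v)⁻¹ * Real.exp (ω u v / 2);
     R u v * Real.exp (-(ω u v) / 2), -(pd2 ω u v) / 4]

lemma hasDerivAt_slice1 {F : ℝ → ℝ → ℝ} {s : Set (ℝ×ℝ)} (hs : IsOpen s)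
    (hF : Smooth2 F s) {u v : ℝ} (hp : (u,v) ∈ s) :
    HasDerivAt (fun x => F x v) (fderiv ℝ (fun p : ℝ×ℝ => F p.1 p.2) (u,v) (1,0)) u := by
  have hW : DifferentiableAt ℝ (fun p : ℝ×ℝ => F p.1 p.2) (u,v) :=
    (hF.contDiffAt (hs.mem_nhds hp)).differentiableAt (by simp)
  have hc : HasDerivAt (fun x : ℝ => (x, v)) ((1:ℝ), (0:ℝ)) u :=
    (hasDerivAt_id u).prodMk (hasDerivAt_const u v)
  exact hW.hasFDerivAt.comp_hasDerivAt u hc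

lemma hasDerivAt_slice2 {F : ℝ → ℝ → ℝ} {s : Set (ℝ×ℝ)} (hs : IsOpen s)
    (hF : Smooth2 F s) {u v : ℝ} (hp : (u,v) ∈ s) :
    HasDerivAt (fun y => F u y) (fderiv ℝ (fun p : ℝ×ℝ => F p.1 p.2) (u,v) (0,1)) v := by
  have hW : DifferentiableAt ℝ (fun p : ℝ×ℝ => F p.1 p.2) (u,v) :=
    (hF.contDiffAt (hs.mem_nhds hp)).differentiableAt (by simp)
  have hc : HasDerivAt (fun y : ℝ => (u, y)) ((0:ℝ), (1:ℝ)) v :=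
    (hasDerivAt_const v u).prodMk (hasDerivAt_id v)
  exact hW.hasFDerivAt.comp_hasDerivAt v hc

lemma hasDerivAt_pd1 {F : ℝ → ℝ → ℝ} {s : Set (ℝ×ℝ)} (hs : IsOpen s)
    (hF : Smooth2 F s) {u v : ℝ} (hp : (u,v) ∈ s) :
    HasDerivAt (fun x => F x v) (pd1 F u v) u := by
  have h := hasDerivAt_slice1 hs hF hp
  have e : pd1 F u v = fderiv ℝ (fun p : ℝ×ℝ => F p.1 p.2) (u,v) (1,0) := h.deriv
  rw [e]; exact h

lemma hasDerivAt_pd2 {F : ℝ → ℝ → ℝ} {s : Set (ℝ×ℝ)} (hs : IsOpen s)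
    (hF : Smooth2 F s) {u v : ℝ} (hp : (u,v) ∈ s) :
    HasDerivAt (fun y => F u y) (pd2 F u v) v := by
  have h := hasDerivAt_slice2 hs hF hp
  have e : pd2 F u v = fderiv ℝ (fun p : ℝ×ℝ => F p.1 p.2) (u,v) (0,1) := h.deriv
  rw [e]; exact h

lemma mixed_partials {F : ℝ → ℝ → ℝ} {s : Set (ℝ×ℝ)} (hs : IsOpen s)
    (hF : Smooth2 F s) {u v : ℝ} (hp : (u,v) ∈ s) :
    HasDerivAt (fun x => pd2 F x v) (pd2 (pd1 F) u v) u ∧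
    HasDerivAt (fun y => pd1 F u y) (pd2 (pd1 F) u v) v := by
  set W : ℝ×ℝ → ℝ := fun p => F p.1 p.2 with hWdef
  have hWp : ContDiffAt ℝ (⊤:ℕ∞) W (u,v) := hF.contDiffAt (hs.mem_nhds hp)
  have hfd : ContDiffAt ℝ (⊤:ℕ∞) (fderiv ℝ W) (u,v) := hWp.fderiv_right (by exact_mod_cast le_top)
  have hfdd : DifferentiableAt ℝ (fderiv ℝ W) (u,v) := hfd.differentiableAt (by simp)
  have hWp2 : ContDiffAt ℝ (2:ℕ∞) W (u,v) := (hF.of_le (by exact_mod_cast le_top)).contDiffAt (hs.mem_nhds hp)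
  have hsymm : IsSymmSndFDerivAt ℝ W (u,v) := hWp2.isSymmSndFDerivAt (by simp)
  have hmemx : ∀ᶠ x in 𝓝 u, (x, v) ∈ s := by
    have hct : ContinuousAt (fun x : ℝ => (x, v)) u := by fun_prop
    exact hct.eventually_mem (hs.mem_nhds hp)
  have hmemy : ∀ᶠ y in 𝓝 v, (u, y) ∈ s := by
    have hct : ContinuousAt (fun y : ℝ => (u, y)) v := by fun_prop
    exact hct.eventually_mem (hs.mem_nhds hp)
  have hBd : DifferentiableAt ℝ (fun q : ℝ×ℝ => fderiv ℝ W q ((0:ℝ),(1:ℝ))) (u,v) :=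
    hfdd.clm_apply (differentiableAt_const _)
  have hCd : DifferentiableAt ℝ (fun q : ℝ×ℝ => fderiv ℝ W q ((1:ℝ),(0:ℝ))) (u,v) :=
    hfdd.clm_apply (differentiableAt_const _)
  have hBval : fderiv ℝ (fun q : ℝ×ℝ => fderiv ℝ W q ((0:ℝ),(1:ℝ))) (u,v)
      = (fderiv ℝ (fderiv ℝ W) (u,v)).flip ((0:ℝ),(1:ℝ)) := by
    rw [fderiv_clm_apply hfdd (differentiableAt_const _)]
    simp
  have hCval : fderiv ℝ (fun q : ℝ×ℝ => fderiv ℝ W q ((1:ℝ),(0:ℝ))) (u,v)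
      = (fderiv ℝ (fderiv ℝ W) (u,v)).flip ((1:ℝ),(0:ℝ)) := by
    rw [fderiv_clm_apply hfdd (differentiableAt_const _)]
    simp
  have hcx : HasDerivAt (fun x : ℝ => (x, v)) ((1:ℝ), (0:ℝ)) u :=
    (hasDerivAt_id u).prodMk (hasDerivAt_const u v)
  have hcy : HasDerivAt (fun y : ℝ => (u, y)) ((0:ℝ), (1:ℝ)) v :=
    (hasDerivAt_const v u).prodMk (hasDerivAt_id v)
  have hB : HasDerivAt (fun x => fderiv ℝ W (x, v) ((0:ℝ),(1:ℝ)))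
      (fderiv ℝ (fun q : ℝ×ℝ => fderiv ℝ W q ((0:ℝ),(1:ℝ))) (u,v) (1,0)) u :=
    by exact hBd.hasFDerivAt.comp_hasDerivAt u hcx
  have hC : HasDerivAt (fun y => fderiv ℝ W (u, y) ((1:ℝ),(0:ℝ)))
      (fderiv ℝ (fun q : ℝ×ℝ => fderiv ℝ W q ((1:ℝ),(0:ℝ))) (u,v) (0,1)) v :=
    hCd.hasFDerivAt.comp_hasDerivAt v hcy
  have e2 : (fun x => pd2 F x v) =ᶠ[𝓝 u] fun x => fderiv ℝ W (x, v) ((0:ℝ),(1:ℝ)) := by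
    filter_upwards [hmemx] with x hx
    exact (hasDerivAt_slice2 hs hF hx).deriv
  have e1 : (fun y => pd1 F u y) =ᶠ[𝓝 v] fun y => fderiv ℝ W (u, y) ((1:ℝ),(0:ℝ)) := by
    filter_upwards [hmemy] with y hy
    exact (hasDerivAt_slice1 hs hF hy).deriv
  have h1 : HasDerivAt (fun x => pd2 F x v)
      (fderiv ℝ (fun q : ℝ×ℝ => fderiv ℝ W q ((0:ℝ),(1:ℝ))) (u,v) (1,0)) u :=
    hB.congr_of_eventuallyEq e2
  have h2 : HasDerivAt (fun y => pd1 F u y)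
      (fderiv ℝ (fun q : ℝ×ℝ => fderiv ℝ W q ((1:ℝ),(0:ℝ))) (u,v) (0,1)) v :=
    hC.congr_of_eventuallyEq e1
  have hval : pd2 (pd1 F) u v
      = fderiv ℝ (fun q : ℝ×ℝ => fderiv ℝ W q ((1:ℝ),(0:ℝ))) (u,v) (0,1) := h2.deriv
  have hswap : fderiv ℝ (fun q : ℝ×ℝ => fderiv ℝ W q ((0:ℝ),(1:ℝ))) (u,v) (1,0)
      = fderiv ℝ (fun q : ℝ×ℝ => fderiv ℝ W q ((1:ℝ),(0:ℝ))) (u,v) (0,1) := by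
    rw [hBval, hCval]
    simp only [ContinuousLinearMap.flip_apply]
    exact hsymm _ _
  constructor
  · rw [hval, ← hswap]; exact h1
  · rw [hval]; exact h2

/-- Lax representation with variable spectral parameter:
if `(ω, Q, R)` satisfies (G₀) and (C₀) with mean curvature `H = 1/(f + g)`, then with
`λ = (1 − 2τg)/(1 + 2τf)` the pair `U_λ, V_λ` satisfies the zero curvature equation
`∂_u V_λ − ∂_v U_λ + [U_λ, V_λ] = 0` on `D = I × J`. -/
theorem statement1
    (I J : Set ℝ) (hIopen : IsOpen I) (hIint : I.OrdConnected)
    (hJopen : IsOpen J) (hJint : J.OrdConnected)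
    (f g : ℝ → ℝ)
    (hf : ContDiffOn ℝ (⊤ : ℕ∞) f I) (hg : ContDiffOn ℝ (⊤ : ℕ∞) g J)
    (hfg : ∀ u ∈ I, ∀ v ∈ J, f u + g v ≠ 0)
    (τ : ℝ)
    (hτf : ∀ u ∈ I, 1 + 2 * τ * f u ≠ 0)
    (hτg : ∀ v ∈ J, 1 - 2 * τ * g v ≠ 0)
    (H lam : ℝ → ℝ → ℝ)
    (hH : ∀ u v, H u v = 1 / (f u + g v))
    (hlam : ∀ u v, lam u v = (1 - 2 * τ * g v) / (1 + 2 * τ * f u))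
    (ω Q R : ℝ → ℝ → ℝ)
    (hω : Smooth2 ω (I ×ˢ J)) (hQ : Smooth2 Q (I ×ˢ J)) (hR : Smooth2 R (I ×ˢ J))
    (hGauss : ∀ u ∈ I, ∀ v ∈ J, GaussEq 0 ω Q R H u v)
    (hCodazzi : ∀ u ∈ I, ∀ v ∈ J, CodazziEq ω Q R H u v) :
    ∀ u ∈ I, ∀ v ∈ J,
      mderiv (fun x => Vmat ω R H lam x v) u - mderiv (fun y => Umat ω Q H lam u y) v +
        (Umat ω Q H lam u v * Vmat ω R H lam u v - Vmat ω R H lam u v * Umat ω Q H lam u v)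
        = 0 := by
  intro u hu v hv
  have hs : IsOpen (I ×ˢ J) := hIopen.prod hJopen
  have hp : (u, v) ∈ I ×ˢ J := ⟨hu, hv⟩
  -- basic nonzero facts
  have hfg0 : f u + g v ≠ 0 := hfg u hu v hv
  have hP0 : 1 + 2 * τ * f u ≠ 0 := hτf u hu
  have hM0 : 1 - 2 * τ * g v ≠ 0 := hτg v hv
  -- derivatives of f, g
  have hf' : HasDerivAt f (deriv f u) u :=
    (((hf.contDiffAt (hIopen.mem_nhds hu)).differentiableAt (by simp))).hasDerivAt
  have hg' : HasDerivAt g (deriv g v) v :=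
    (((hg.contDiffAt (hJopen.mem_nhds hv)).differentiableAt (by simp))).hasDerivAt
  set f' := deriv f u
  set g' := deriv g v
  -- slice derivatives of ω, Q, R
  have hω1 : HasDerivAt (fun x => ω x v) (pd1 ω u v) u := hasDerivAt_pd1 hs hω hp
  have hω2 : HasDerivAt (fun y => ω u y) (pd2 ω u v) v := hasDerivAt_pd2 hs hω hp
  have hR1 : HasDerivAt (fun x => R x v) (pd1 R u v) u := hasDerivAt_pd1 hs hR hp
  have hQ2 : HasDerivAt (fun y => Q u y) (pd2 Q u v) v := hasDerivAt_pd2 hs hQ hp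
  obtain ⟨hm1, hm2⟩ := mixed_partials hs hω hp
  -- derivative of H in each variable
  have hden1 : HasDerivAt (fun t => f t + g v) f' u := hf'.add_const _
  have hH1 : HasDerivAt (fun t => H t v) (-f' / (f u + g v) ^ 2) u := by
    simp only [hH, one_div]
    exact hden1.inv hfg0
  have hden2 : HasDerivAt (fun t => f u + g t) g' v := hg'.const_add _
  have hH2 : HasDerivAt (fun t => H u t) (-g' / (f u + g v) ^ 2) v := by
    simp only [hH, one_div]
    exact hden2.inv hfg0
  -- Codazzi relations with explicit H-derivatives
  obtain ⟨hC1, hC2⟩ := hCodazzi u hu v hv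
  have e1 : pd1 H u v = -f' / (f u + g v) ^ 2 := hH1.deriv
  have e2 : pd2 H u v = -g' / (f u + g v) ^ 2 := hH2.deriv
  rw [e1] at hC1
  rw [e2] at hC2
  -- Gauss
  have hG := hGauss u hu v hv
  unfold GaussEq at hG
  -- lam slices
  have hLi1 : HasDerivAt (fun t => (lam t v)⁻¹) (2 * τ * f' / (1 - 2 * τ * g v)) u := by
    simp only [hlam, inv_div]
    exact ((hf'.const_mul (2*τ)).const_add 1).div_const _
  have hL2 : HasDerivAt (fun t => lam u t) (-(2 * τ * g') / (1 + 2 * τ * f u)) v := by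
    simp only [hlam]
    exact ((hg'.const_mul (2*τ)).const_sub 1).div_const _
  -- exponential slices
  have hE1 : HasDerivAt (fun t => Real.exp (ω t v / 2))
      (Real.exp (ω u v / 2) * (pd1 ω u v / 2)) u := (hω1.div_const 2).exp
  have hE2 : HasDerivAt (fun t => Real.exp (ω u t / 2))
      (Real.exp (ω u v / 2) * (pd2 ω u v / 2)) v := (hω2.div_const 2).exp
  have hEn1 : HasDerivAt (fun t => Real.exp (-ω t v / 2))
      (Real.exp (-ω u v / 2) * (-pd1 ω u v / 2)) u := ((hω1.neg.div_const 2)).exp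
  have hEn2 : HasDerivAt (fun t => Real.exp (-ω u t / 2))
      (Real.exp (-ω u v / 2) * (-pd2 ω u v / 2)) v := ((hω2.neg.div_const 2)).exp
  -- entry derivative facts
  have hV00 : HasDerivAt (fun t => pd2 ω t v / 4) (pd2 (pd1 ω) u v / 4) u := hm1.div_const 4
  have hV01 := (((hH1.div_const 2).neg.mul hLi1).mul hE1)
  have hV10 := hR1.mul hEn1
  have hV11 : HasDerivAt (fun t => -(pd2 ω t v) / 4) (-(pd2 (pd1 ω) u v) / 4) u :=
    (hm1.neg).div_const 4
  have hU00 : HasDerivAt (fun t => -(pd1 ω u t) / 4) (-(pd2 (pd1 ω) u v) / 4) v :=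
    (hm2.neg).div_const 4
  have hU01 := hQ2.neg.mul hEn2
  have hU10 := (((hH2.div_const 2).mul hL2).mul hE2)
  have hU11 : HasDerivAt (fun t => pd1 ω u t / 4) (pd2 (pd1 ω) u v / 4) v := hm2.div_const 4
  -- abbreviations and exp facts
  have hEn : Real.exp (-ω u v / 2) = (Real.exp (ω u v / 2))⁻¹ := by
    rw [neg_div, Real.exp_neg]
  have hQv : pd2 Q u v = -f' * Real.exp (ω u v) / (2 * (f u + g v) ^ 2) := by
    rw [Real.exp_neg] at hC1
    have hX0 : Real.exp (ω u v) ≠ 0 := Real.exp_ne_zero _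
    field_simp at hC1 ⊢
    linear_combination -hC1
  have hRu : pd1 R u v = -g' * Real.exp (ω u v) / (2 * (f u + g v) ^ 2) := by
    rw [Real.exp_neg] at hC2
    have hX0 : Real.exp (ω u v) ≠ 0 := Real.exp_ne_zero _
    field_simp at hC2 ⊢
    linear_combination -hC2
  have hE0 : Real.exp (ω u v / 2) ≠ 0 := Real.exp_ne_zero _
  have hL0 : lam u v ≠ 0 := by rw [hlam]; exact div_ne_zero hM0 hP0
  have hLL : lam u v * (lam u v)⁻¹ = 1 := mul_inv_cancel₀ hL0
  have hE2' : Real.exp (ω u v / 2) * Real.exp (ω u v / 2) = Real.exp (ω u v) := by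
    rw [← Real.exp_add]; ring_nf
  have hEn2' : Real.exp (-ω u v / 2) * Real.exp (-ω u v / 2) = Real.exp (-ω u v) := by
    rw [← Real.exp_add]; ring_nf
  have hEEn : Real.exp (ω u v / 2) * Real.exp (-ω u v / 2) = 1 := by
    rw [← Real.exp_add]; ring_nf; exact Real.exp_zero
  ext i j
  fin_cases i <;> fin_cases j <;>
    simp only [mderiv, Umat, Vmat, Matrix.sub_apply, Matrix.add_apply, Matrix.mul_apply,
      Fin.sum_univ_two, Matrix.of_apply, Matrix.cons_val', Matrix.cons_val_zero,
      Matrix.cons_val_one, Matrix.head_cons, Matrix.head_fin_const, Matrix.empty_val',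
      Matrix.cons_val_fin_one, Matrix.zero_apply, Fin.mk_zero, Fin.mk_one, Fin.isValue]
  · -- entry (0,0)
    rw [hV00.deriv, hU00.deriv]
    linear_combination (1/2 : ℝ) * hG - (Q u v * R u v) * hEn2'
      + (H u v ^ 2 / 4 * Real.exp (ω u v / 2) ^ 2) * hLL + (H u v ^ 2 / 4) * hE2'
  · -- entry (0,1)
    erw [hV01.deriv, hU01.deriv]
    rw [hQv, hEn]
    simp only [hH, hlam, inv_div, one_div, Pi.mul_apply, Pi.neg_apply]
    rw [← hE2']
    field_simp
    ring_nf
    field_simp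
    ring
  · -- entry (1,0)
    erw [hV10.deriv, hU10.deriv]
    rw [hRu, hEn]
    simp only [hH, hlam, inv_div, one_div, Pi.mul_apply, Pi.neg_apply]
    rw [← hE2']
    field_simp
    ring_nf
    have key : (1 + f u * τ * 2)⁻¹ * (1 + f u * τ * 2) = 1 :=
      inv_mul_cancel₀ (by intro h; apply hP0; linarith)
    linear_combination (g' * Real.exp (ω u v * (1 / 2)) ^ 2 * 8) * key
  · -- entry (1,1)
    rw [hV11.deriv, hU11.deriv]
    linear_combination (-1/2 : ℝ) * hG + (Q u v * R u v) * hEn2'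
      - (H u v ^ 2 / 4 * Real.exp (ω u v / 2) ^ 2) * hLL - (H u v ^ 2 / 4) * hE2'
end
end

section
/- Let I, J ⊆ ℝ be open intervals, D = I × J, f : I → ℝ, g : J → ℝ smooth with f + g nowhere zero, H = 1/(f + g), and let ω, Q, R : D → ℝ be smooth satisfying the Gauss equation (G₀) and the Codazzi equations (C₀) with mean curvature H. Let T ⊆ ℝ be an open interval such that 1 + 2τ f(u) ≠ 0 and 1 − 2τ g(v) ≠ 0 for all (u,v) ∈ D, τ ∈ T, and set λ(u,v;τ) = (1 − 2τ g(v))/(1 + 2τ f(u)). Let Φ : D × T → SL₂(ℝ) be smooth with ∂_u Φ = Φ U_λ and ∂_v Φ = Φ V_λ for each τ ∈ T, where U_λ = [[−ω_u/4, −Q e^{−ω/2}], [(H/2) λ e^{ω/2}, ω_u/4]], V_λ = [[ω_v/4, −(H/2) λ^{−1} e^{ω/2}], [R e^{−ω/2}, −ω_v/4]]. Define F = −(∂_τ Φ)Φ^{−1} and N = Φ k′ Φ^{−1}, where k′ = diag(−1, 1). Then for each fixed τ ∈ T: tr F = 0; with the bilinear form ⟨X,Y⟩ = (1/2)tr(XY)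 one has ⟨∂_u F, ∂_u F⟩ = 0, ⟨∂_v F, ∂_v F⟩ = 0, 2⟨∂_u F, ∂_v F⟩ = e^ω/((1 + 2τf)²(1 − 2τg)²), ⟨N,N⟩ = 1, and ⟨∂_u F, N⟩ = ⟨∂_v F, N⟩ = 0. -/
open Matrix Filter Topology

noncomputable section

/-- The matrix `k′ = diag(−1, 1)`. -/
def kmat : Matrix (Fin 2) (Fin 2) ℝ := !![-1, 0; 0, 1]

/-- The scalar product `⟨X,Y⟩ = (1/2) tr(XY)` (the metric of `E³₁ = 𝔰𝔩₂ℝ`). -/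
def form1 (X Y : Matrix (Fin 2) (Fin 2) ℝ) : ℝ := (1 / 2) * (X * Y).trace

lemma sliceY {φ : ℝ × ℝ → ℝ} {x y : ℝ} (h : DifferentiableAt ℝ φ (x, y)) :
    HasDerivAt (fun y' => φ (x, y')) (fderiv ℝ φ (x, y) (0, 1)) y := by
  have hι : HasDerivAt (fun y' : ℝ => ((x, y') : ℝ × ℝ)) ((0 : ℝ), (1 : ℝ)) y :=
    (hasDerivAt_const y x).prodMk (hasDerivAt_id y)
  exact h.hasFDerivAt.comp_hasDerivAt y hι

lemma sliceX {φ : ℝ × ℝ → ℝ} {x y : ℝ} (h : DifferentiableAt ℝ φ (x, y)) :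
    HasDerivAt (fun x' => φ (x', y)) (fderiv ℝ φ (x, y) (1, 0)) x := by
  have hι : HasDerivAt (fun x' : ℝ => ((x', y) : ℝ × ℝ)) ((1 : ℝ), (0 : ℝ)) x :=
    (hasDerivAt_id x).prodMk (hasDerivAt_const x y)
  exact h.hasFDerivAt.comp_hasDerivAt x hι

lemma clairaut2 {φ : ℝ × ℝ → ℝ} {a b : ℝ}
    (h : ∀ᶠ q in 𝓝 (a, b), ContDiffAt ℝ (⊤ : ℕ∞) φ q) :
    ∃ D : ℝ,
      HasDerivAt (fun x => deriv (fun y => φ (x, y)) b) D a ∧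
      HasDerivAt (fun y => deriv (fun x => φ (x, y)) a) D b := by
  have hd : ∀ᶠ q in 𝓝 (a, b), DifferentiableAt ℝ φ q :=
    h.mono fun q hq => hq.differentiableAt (by simp)
  have hctr : ContDiffAt ℝ 1 (fderiv ℝ φ) (a, b) :=
    h.self_of_nhds.fderiv_right (by exact ENat.natCast_le_of_coe_top_le_withTop le_rfl (1+1))
  have hf'' : HasFDerivAt (fderiv ℝ φ) (fderiv ℝ (fderiv ℝ φ) (a, b)) (a, b) :=
    (hctr.differentiableAt one_ne_zero).hasFDerivAt
  have hsymm := second_derivative_symmetric_of_eventually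
    (hd.mono fun q hq => hq.hasFDerivAt) hf'' ((1 : ℝ), (0 : ℝ)) ((0 : ℝ), (1 : ℝ))
  set f'' := fderiv ℝ (fderiv ℝ φ) (a, b) with hf''def
  refine ⟨f'' (1, 0) (0, 1), ?_, ?_⟩
  · -- outer in x of ψ q := fderiv φ q (0,1)
    have hψ : HasFDerivAt (fun q => fderiv ℝ φ q ((0 : ℝ), (1 : ℝ)))
        ((fderiv ℝ φ (a, b)).comp (0 : (ℝ × ℝ) →L[ℝ] (ℝ × ℝ)) + f''.flip (0, 1)) (a, b) :=
      hf''.clm_apply (hasFDerivAt_const _ _)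
    have hι : HasDerivAt (fun x : ℝ => ((x, b) : ℝ × ℝ)) ((1 : ℝ), (0 : ℝ)) a :=
      (hasDerivAt_id a).prodMk (hasDerivAt_const a b)
    have h1 : HasDerivAt (fun x : ℝ => fderiv ℝ φ (x, b) ((0 : ℝ), (1 : ℝ)))
        (f'' (1, 0) (0, 1)) a := by
      have := hψ.comp_hasDerivAt a hι
      simp at this; exact this
    have hev : ∀ᶠ x in 𝓝 a, DifferentiableAt ℝ φ (x, b) := by
      have hc : ContinuousAt (fun x : ℝ => ((x, b) : ℝ × ℝ)) a := by fun_prop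
      exact hc.eventually hd
    refine h1.congr_of_eventuallyEq (hev.mono fun x hx => ?_)
    simpa using (sliceY hx).deriv
  · have hψ : HasFDerivAt (fun q => fderiv ℝ φ q ((1 : ℝ), (0 : ℝ)))
        ((fderiv ℝ φ (a, b)).comp (0 : (ℝ × ℝ) →L[ℝ] (ℝ × ℝ)) + f''.flip (1, 0)) (a, b) :=
      hf''.clm_apply (hasFDerivAt_const _ _)
    have hι : HasDerivAt (fun y : ℝ => ((a, y) : ℝ × ℝ)) ((0 : ℝ), (1 : ℝ)) b :=
      (hasDerivAt_const b a).prodMk (hasDerivAt_id b)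
    have h1 : HasDerivAt (fun y : ℝ => fderiv ℝ φ (a, y) ((1 : ℝ), (0 : ℝ)))
        (f'' (1, 0) (0, 1)) b := by
      have := hψ.comp_hasDerivAt b hι
      rw [hsymm]
      simp [Function.comp] at this; exact this
    have hev : ∀ᶠ y in 𝓝 b, DifferentiableAt ℝ φ (a, y) := by
      have hc : ContinuousAt (fun y : ℝ => ((a, y) : ℝ × ℝ)) b := by fun_prop
      exact hc.eventually hd
    refine h1.congr_of_eventuallyEq (hev.mono fun y hy => ?_)
    simpa using (sliceX hy).deriv



lemma hasDerivAt_matmul {A B : ℝ → Matrix (Fin 2) (Fin 2) ℝ}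
    {A' B' : Matrix (Fin 2) (Fin 2) ℝ} {x : ℝ}
    (hA : ∀ i j, HasDerivAt (fun t => A t i j) (A' i j) x)
    (hB : ∀ i j, HasDerivAt (fun t => B t i j) (B' i j) x) (i j : Fin 2) :
    HasDerivAt (fun t => (A t * B t) i j) ((A' * B x + A x * B') i j) x := by
  have h : HasDerivAt (fun t => ∑ k, A t i k * B t k j)
      (∑ k, (A' i k * B x k j + A x i k * B' k j)) x :=
    HasDerivAt.fun_sum fun k _ => (hA i k).mul (hB k j)
  have he : (fun t => (A t * B t) i j) = fun t => ∑ k, A t i k * B t k j := by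
    funext t; simp [Matrix.mul_apply]
  rw [he]
  convert h using 1
  simp [Matrix.mul_apply, Matrix.add_apply, Finset.sum_add_distrib]

/-- Sym formula, Proposition 3.4: for a solution `Φ` of the Lax pair
with variable spectral parameter `λ(u,v;τ) = (1 − 2τg)/(1 + 2τf)`, the Sym formula
`F = −(∂_τ Φ)Φ⁻¹` gives a trace-free (i.e. `𝔰𝔩₂ℝ ≅ E³₁`-valued) map which is conformal
with `⟨F_u,F_u⟩ = ⟨F_v,F_v⟩ = 0`, `2⟨F_u,F_v⟩ = e^ω/((1+2τf)²(1−2τg)²)`, and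
`N = Φk′Φ⁻¹` is a unit normal. -/
theorem statement2
    (I J T : Set ℝ)
    (hIopen : IsOpen I) (hIint : I.OrdConnected)
    (hJopen : IsOpen J) (hJint : J.OrdConnected)
    (hTopen : IsOpen T) (hTint : T.OrdConnected)
    (f g : ℝ → ℝ)
    (hf : ContDiffOn ℝ (⊤ : ℕ∞) f I) (hg : ContDiffOn ℝ (⊤ : ℕ∞) g J)
    (hfg : ∀ u ∈ I, ∀ v ∈ J, f u + g v ≠ 0)
    (hτf : ∀ t ∈ T, ∀ u ∈ I, 1 + 2 * t * f u ≠ 0)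
    (hτg : ∀ t ∈ T, ∀ v ∈ J, 1 - 2 * t * g v ≠ 0)
    (H : ℝ → ℝ → ℝ) (hH : ∀ u v, H u v = 1 / (f u + g v))
    (lam : ℝ → ℝ → ℝ → ℝ)
    (hlam : ∀ t u v, lam t u v = (1 - 2 * t * g v) / (1 + 2 * t * f u))
    (ω Q R : ℝ → ℝ → ℝ)
    (hω : Smooth2 ω (I ×ˢ J)) (hQ : Smooth2 Q (I ×ˢ J)) (hR : Smooth2 R (I ×ˢ J))
    (hGauss : ∀ u ∈ I, ∀ v ∈ J, GaussEq 0 ω Q R H u v)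
    (hCodazzi : ∀ u ∈ I, ∀ v ∈ J, CodazziEq ω Q R H u v)
    (Φ : ℝ → ℝ → ℝ → Matrix (Fin 2) (Fin 2) ℝ)
    (hΦsmooth : ∀ i j, ContDiffOn ℝ (⊤ : ℕ∞)
      (fun p : ℝ × ℝ × ℝ => Φ p.1 p.2.1 p.2.2 i j) (I ×ˢ J ×ˢ T))
    (hΦdet : ∀ u ∈ I, ∀ v ∈ J, ∀ t ∈ T, (Φ u v t).det = 1)
    (hLaxU : ∀ u ∈ I, ∀ v ∈ J, ∀ t ∈ T,
      mderiv (fun x => Φ x v t) u = Φ u v t * Umat ω Q H (lam t) u v)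
    (hLaxV : ∀ u ∈ I, ∀ v ∈ J, ∀ t ∈ T,
      mderiv (fun y => Φ u y t) v = Φ u v t * Vmat ω R H (lam t) u v)
    (F N : ℝ → ℝ → ℝ → Matrix (Fin 2) (Fin 2) ℝ)
    (hF : ∀ u v t, F u v t = -(mderiv (fun s => Φ u v s) t) * (Φ u v t)⁻¹)
    (hN : ∀ u v t, N u v t = Φ u v t * kmat * (Φ u v t)⁻¹) :
    ∀ u ∈ I, ∀ v ∈ J, ∀ t ∈ T,
      (F u v t).trace = 0 ∧
      form1 (mderiv (fun x => F x v t) u) (mderiv (fun x => F x v t) u) = 0 ∧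
      form1 (mderiv (fun y => F u y t) v) (mderiv (fun y => F u y t) v) = 0 ∧
      2 * form1 (mderiv (fun x => F x v t) u) (mderiv (fun y => F u y t) v)
        = Real.exp (ω u v) / ((1 + 2 * t * f u) ^ 2 * (1 - 2 * t * g v) ^ 2) ∧
      form1 (N u v t) (N u v t) = 1 ∧
      form1 (mderiv (fun x => F x v t) u) (N u v t) = 0 ∧
      form1 (mderiv (fun y => F u y t) v) (N u v t) = 0 := by
  intro u hu v hv t ht
  have hfg0 : f u + g v ≠ 0 := hfg u hu v hv
  have d1 : (1 : ℝ) + 2 * t * f u ≠ 0 := hτf t ht u hu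
  have d2 : (1 : ℝ) - 2 * t * g v ≠ 0 := hτg t ht v hv
  set S : Set (ℝ × ℝ × ℝ) := I ×ˢ J ×ˢ T with hSdef
  have hSopen : IsOpen S := hIopen.prod (hJopen.prod hTopen)
  have hφ : ∀ (i j : Fin 2), ∀ q ∈ S, ContDiffAt ℝ (⊤ : ℕ∞)
      (fun p : ℝ × ℝ × ℝ => Φ p.1 p.2.1 p.2.2 i j) q :=
    fun i j q hq => (hΦsmooth i j).contDiffAt (hSopen.mem_nhds hq)
  have hone : ((⊤ : ℕ∞) : WithTop ℕ∞) ≠ 0 := by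
    simp
  have hdiff1 : ∀ (i j : Fin 2) (a b c : ℝ), (a, b, c) ∈ S →
      DifferentiableAt ℝ (fun x => Φ x b c i j) a := by
    intro i j a b c hm
    have h2 : ContDiffAt ℝ (⊤ : ℕ∞) (fun x : ℝ => ((x, b, c) : ℝ × ℝ × ℝ)) a :=
      (contDiff_id.prodMk contDiff_const).contDiffAt
    exact (((hφ i j _ hm).comp a h2).differentiableAt hone)
  have hdiff2 : ∀ (i j : Fin 2) (a b c : ℝ), (a, b, c) ∈ S →
      DifferentiableAt ℝ (fun y => Φ a y c i j) b := by
    intro i j a b c hm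
    have h2 : ContDiffAt ℝ (⊤ : ℕ∞) (fun y : ℝ => ((a, y, c) : ℝ × ℝ × ℝ)) b :=
      (contDiff_const.prodMk (contDiff_id.prodMk contDiff_const)).contDiffAt
    exact (((hφ i j _ hm).comp b h2).differentiableAt hone)
  have hdiff3 : ∀ (i j : Fin 2) (a b c : ℝ), (a, b, c) ∈ S →
      DifferentiableAt ℝ (fun s => Φ a b s i j) c := by
    intro i j a b c hm
    have h2 : ContDiffAt ℝ (⊤ : ℕ∞) (fun s : ℝ => ((a, b, s) : ℝ × ℝ × ℝ)) c :=
      (contDiff_const.prodMk (contDiff_const.prodMk contDiff_id)).contDiffAt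
    exact (((hφ i j _ hm).comp c h2).differentiableAt hone)
  -- Lax pair as HasDerivAt, entrywise
  have hUder : ∀ (i j : Fin 2) (s : ℝ), s ∈ T →
      HasDerivAt (fun x => Φ x v s i j) ((Φ u v s * Umat ω Q H (lam s) u v) i j) u := by
    intro i j s hs
    have h1 := (hdiff1 i j u v s ⟨hu, hv, hs⟩).hasDerivAt
    have h2 : deriv (fun x => Φ x v s i j) u
        = (Φ u v s * Umat ω Q H (lam s) u v) i j := by
      calc deriv (fun x => Φ x v s i j) u = mderiv (fun x => Φ x v s) u i j := by
            simp [mderiv]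
        _ = _ := by rw [hLaxU u hu v hv s hs]
    rwa [h2] at h1
  have hVder : ∀ (i j : Fin 2) (s : ℝ), s ∈ T →
      HasDerivAt (fun y => Φ u y s i j) ((Φ u v s * Vmat ω R H (lam s) u v) i j) v := by
    intro i j s hs
    have h1 := (hdiff2 i j u v s ⟨hu, hv, hs⟩).hasDerivAt
    have h2 : deriv (fun y => Φ u y s i j) v
        = (Φ u v s * Vmat ω R H (lam s) u v) i j := by
      calc deriv (fun y => Φ u y s i j) v = mderiv (fun y => Φ u y s) v i j := by
            simp [mderiv]
        _ = _ := by rw [hLaxV u hu v hv s hs]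
    rwa [h2] at h1
  set P := Φ u v t with hPdef
  set Φτ := mderiv (fun s => Φ u v s) t with hΦτdef
  have hAs : ∀ i j : Fin 2, HasDerivAt (fun s => Φ u v s i j) (Φτ i j) t := by
    intro i j
    simpa [hΦτdef, mderiv] using (hdiff3 i j u v t ⟨hu, hv, ht⟩).hasDerivAt
  -- derivative of the spectral parameter
  set lamτ : ℝ := -2 * (f u + g v) / (1 + 2 * t * f u) ^ 2 with hlamτdef
  set muτ : ℝ := 2 * (f u + g v) / (1 - 2 * t * g v) ^ 2 with hmuτdef
  have hnum : HasDerivAt (fun s : ℝ => 1 - 2 * s * g v) (-(2 * g v)) t := by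
    have h0 : HasDerivAt (fun s : ℝ => 2 * g v * s) (2 * g v) t := by
      simpa using (hasDerivAt_id t).const_mul (2 * g v)
    exact (h0.const_sub 1).congr_of_eventuallyEq (Eventually.of_forall fun s => by
      show (1 : ℝ) - 2 * s * g v = 1 - 2 * g v * s; ring)
  have hden : HasDerivAt (fun s : ℝ => 1 + 2 * s * f u) (2 * f u) t := by
    have h0 : HasDerivAt (fun s : ℝ => 2 * f u * s) (2 * f u) t := by
      simpa using (hasDerivAt_id t).const_mul (2 * f u)
    exact (h0.const_add 1).congr_of_eventuallyEq (Eventually.of_forall fun s => by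
      show (1 : ℝ) + 2 * s * f u = 1 + 2 * f u * s; ring)
  have hlamd : HasDerivAt (fun s => lam s u v) lamτ t := by
    have h := hnum.div hden d1
    have he : (fun s => lam s u v) = fun s : ℝ => (1 - 2 * s * g v) / (1 + 2 * s * f u) :=
      funext fun s => hlam s u v
    rw [he, hlamτdef]
    refine h.congr_deriv ?_
    field_simp
    ring
  have hlamne : lam t u v ≠ 0 := by rw [hlam]; exact div_ne_zero d2 d1
  have hinvd : HasDerivAt (fun s => (lam s u v)⁻¹) muτ t := by
    have h := hlamd.inv hlamne
    refine h.congr_deriv ?_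
    rw [hmuτdef, hlamτdef, hlam]
    rw [div_pow, neg_div, div_div_div_cancel_right₀ (pow_ne_zero 2 d1)]
    ring
  set U := Umat ω Q H (lam t) u v with hUdef
  set V := Vmat ω R H (lam t) u v with hVdef
  set Uτ : Matrix (Fin 2) (Fin 2) ℝ :=
    !![0, 0; H u v / 2 * lamτ * Real.exp (ω u v / 2), 0] with hUτdef
  set Vτ : Matrix (Fin 2) (Fin 2) ℝ :=
    !![0, -(H u v / 2) * muτ * Real.exp (ω u v / 2); 0, 0] with hVτdef
  have hUτd : ∀ k j : Fin 2, HasDerivAt (fun s => Umat ω Q H (lam s) u v k j) (Uτ k j) t := by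
    intro k j
    fin_cases k <;> fin_cases j
    · simpa [Umat, hUτdef] using hasDerivAt_const t (-(pd1 ω u v) / 4)
    · simpa [Umat, hUτdef] using hasDerivAt_const t (-(Q u v) * Real.exp (-(ω u v) / 2))
    · simpa [Umat, hUτdef] using (hlamd.const_mul (H u v / 2)).mul_const (Real.exp (ω u v / 2))
    · simpa [Umat, hUτdef] using hasDerivAt_const t ((pd1 ω u v) / 4)
  have hVτd : ∀ k j : Fin 2, HasDerivAt (fun s => Vmat ω R H (lam s) u v k j) (Vτ k j) t := by
    intro k j
    fin_cases k <;> fin_cases j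
    · simpa [Vmat, hVτdef] using hasDerivAt_const t ((pd2 ω u v) / 4)
    · simpa [Vmat, hVτdef] using (hinvd.const_mul (-(H u v / 2))).mul_const (Real.exp (ω u v / 2))
    · simpa [Vmat, hVτdef] using hasDerivAt_const t (R u v * Real.exp (-(ω u v) / 2))
    · simpa [Vmat, hVτdef] using hasDerivAt_const t (-(pd2 ω u v) / 4)
  -- mixed partials via Clairaut
  have hFτu : ∀ i j : Fin 2,
      HasDerivAt (fun x => mderiv (fun s => Φ x v s) t i j) ((Φτ * U + P * Uτ) i j) u := by
    intro i j
    have hsm : ∀ᶠ q in 𝓝 ((u, t) : ℝ × ℝ),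
        ContDiffAt ℝ (⊤ : ℕ∞) (fun q : ℝ × ℝ => Φ q.1 v q.2 i j) q := by
      refine ((hIopen.prod hTopen).eventually_mem ⟨hu, ht⟩).mono fun q hq => ?_
      have h2 : ContDiffAt ℝ (⊤ : ℕ∞) (fun q : ℝ × ℝ => ((q.1, v, q.2) : ℝ × ℝ × ℝ)) q :=
        (contDiff_fst.prodMk (contDiff_const.prodMk contDiff_snd)).contDiffAt
      exact (hφ i j (q.1, v, q.2) ⟨hq.1, hv, hq.2⟩).comp q h2
    obtain ⟨D, hD1, hD2⟩ := clairaut2 hsm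
    have hMU : HasDerivAt (fun s => (Φ u v s * Umat ω Q H (lam s) u v) i j)
        ((Φτ * U + P * Uτ) i j) t := by
      simpa using hasDerivAt_matmul (A := fun s => Φ u v s)
        (B := fun s => Umat ω Q H (lam s) u v) hAs hUτd i j
    have hev2 : (fun s => deriv (fun x => Φ x v s i j) u) =ᶠ[𝓝 t]
        (fun s => (Φ u v s * Umat ω Q H (lam s) u v) i j) :=
      (hTopen.eventually_mem ht).mono fun s hs => (hUder i j s hs).deriv
    have hD : D = (Φτ * U + P * Uτ) i j :=
      hD2.unique (hMU.congr_of_eventuallyEq hev2)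
    rw [hD] at hD1
    simpa [mderiv] using hD1
  have hFτv : ∀ i j : Fin 2,
      HasDerivAt (fun y => mderiv (fun s => Φ u y s) t i j) ((Φτ * V + P * Vτ) i j) v := by
    intro i j
    have hsm : ∀ᶠ q in 𝓝 ((v, t) : ℝ × ℝ),
        ContDiffAt ℝ (⊤ : ℕ∞) (fun q : ℝ × ℝ => Φ u q.1 q.2 i j) q := by
      refine ((hJopen.prod hTopen).eventually_mem ⟨hv, ht⟩).mono fun q hq => ?_
      have h2 : ContDiffAt ℝ (⊤ : ℕ∞) (fun q : ℝ × ℝ => ((u, q.1, q.2) : ℝ × ℝ × ℝ)) q :=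
        (contDiff_const.prodMk (contDiff_fst.prodMk contDiff_snd)).contDiffAt
      exact (hφ i j (u, q.1, q.2) ⟨hu, hq.1, hq.2⟩).comp q h2
    obtain ⟨D, hD1, hD2⟩ := clairaut2 hsm
    have hMV : HasDerivAt (fun s => (Φ u v s * Vmat ω R H (lam s) u v) i j)
        ((Φτ * V + P * Vτ) i j) t := by
      simpa using hasDerivAt_matmul (A := fun s => Φ u v s)
        (B := fun s => Vmat ω R H (lam s) u v) hAs hVτd i j
    have hev2 : (fun s => deriv (fun y => Φ u y s i j) v) =ᶠ[𝓝 t]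
        (fun s => (Φ u v s * Vmat ω R H (lam s) u v) i j) :=
      (hTopen.eventually_mem ht).mono fun s hs => (hVder i j s hs).deriv
    have hD : D = (Φτ * V + P * Vτ) i j :=
      hD2.unique (hMV.congr_of_eventuallyEq hev2)
    rw [hD] at hD1
    simpa [mderiv] using hD1
  -- inverse = adjugate
  have hPdet : P.det = 1 := hΦdet u hu v hv t ht
  have hPunit : IsUnit P.det := by rw [hPdet]; exact isUnit_one
  have hPinv : P⁻¹ = P.adjugate := by rw [Matrix.inv_def, hPdet]; simp
  have hinvadjI : ∀ x ∈ I, (Φ x v t)⁻¹ = (Φ x v t).adjugate := fun x hx => by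
    rw [Matrix.inv_def, hΦdet x hx v hv t ht]; simp
  have hinvadjJ : ∀ y ∈ J, (Φ u y t)⁻¹ = (Φ u y t).adjugate := fun y hy => by
    rw [Matrix.inv_def, hΦdet u hu y hy t ht]; simp
  have hadjderU : ∀ k j : Fin 2,
      HasDerivAt (fun x => (Φ x v t).adjugate k j) ((P * U).adjugate k j) u := by
    intro k j
    rw [Matrix.adjugate_fin_two (P * U)]
    fin_cases k <;> fin_cases j <;>
      simp only [Matrix.adjugate_fin_two, Matrix.cons_val', Matrix.cons_val_zero,
        Matrix.cons_val_one, Matrix.head_cons, Matrix.empty_val',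
        Matrix.cons_val_fin_one, Matrix.head_fin_const]
    · exact hUder 1 1 t ht
    · exact (hUder 0 1 t ht).neg
    · exact (hUder 1 0 t ht).neg
    · exact hUder 0 0 t ht
  have hadjderV : ∀ k j : Fin 2,
      HasDerivAt (fun y => (Φ u y t).adjugate k j) ((P * V).adjugate k j) v := by
    intro k j
    rw [Matrix.adjugate_fin_two (P * V)]
    fin_cases k <;> fin_cases j <;>
      simp only [Matrix.adjugate_fin_two, Matrix.cons_val', Matrix.cons_val_zero,
        Matrix.cons_val_one, Matrix.head_cons, Matrix.empty_val',
        Matrix.cons_val_fin_one, Matrix.head_fin_const]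
    · exact hVder 1 1 t ht
    · exact (hVder 0 1 t ht).neg
    · exact (hVder 1 0 t ht).neg
    · exact hVder 0 0 t ht
  -- derivative of F in u
  have hFuentry : ∀ i j : Fin 2, HasDerivAt (fun x => F x v t i j)
      ((-(Φτ * U + P * Uτ) * P.adjugate + -Φτ * (P * U).adjugate) i j) u := by
    intro i j
    have hA : ∀ i' k : Fin 2, HasDerivAt (fun x => (-(mderiv (fun s => Φ x v s) t)) i' k)
        ((-(Φτ * U + P * Uτ)) i' k) u := fun i' k => by
      exact (hFτu i' k).neg
    have hmain := hasDerivAt_matmul (A := fun x => -(mderiv (fun s => Φ x v s) t))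
      (B := fun x => (Φ x v t).adjugate) hA hadjderU i j
    have hev : (fun x => F x v t i j) =ᶠ[𝓝 u]
        (fun x => ((-(mderiv (fun s => Φ x v s) t)) * (Φ x v t).adjugate) i j) :=
      (hIopen.eventually_mem hu).mono fun x hx => by
        show F x v t i j = _
        rw [hF x v t, hinvadjI x hx]
    have h2 := hmain.congr_of_eventuallyEq hev
    simpa [← hΦτdef, ← hPdef] using h2
  have hFventry : ∀ i j : Fin 2, HasDerivAt (fun y => F u y t i j)
      ((-(Φτ * V + P * Vτ) * P.adjugate + -Φτ * (P * V).adjugate) i j) v := by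
    intro i j
    have hA : ∀ i' k : Fin 2, HasDerivAt (fun y => (-(mderiv (fun s => Φ u y s) t)) i' k)
        ((-(Φτ * V + P * Vτ)) i' k) v := fun i' k => by
      exact (hFτv i' k).neg
    have hmain := hasDerivAt_matmul (A := fun y => -(mderiv (fun s => Φ u y s) t))
      (B := fun y => (Φ u y t).adjugate) hA hadjderV i j
    have hev : (fun y => F u y t i j) =ᶠ[𝓝 v]
        (fun y => ((-(mderiv (fun s => Φ u y s) t)) * (Φ u y t).adjugate) i j) :=
      (hJopen.eventually_mem hv).mono fun y hy => by
        show F u y t i j = _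
        rw [hF u y t, hinvadjJ y hy]
    have h2 := hmain.congr_of_eventuallyEq hev
    simpa [← hΦτdef, ← hPdef] using h2
  -- tracelessness of U and V gives adjugate = -
  have hadjU : U.adjugate = -U := by
    rw [Matrix.adjugate_fin_two U]
    ext i j
    fin_cases i <;> fin_cases j <;> simp [hUdef, Umat] <;> ring
  have hadjV : V.adjugate = -V := by
    rw [Matrix.adjugate_fin_two V]
    ext i j
    fin_cases i <;> fin_cases j <;> simp [hVdef, Vmat] <;> ring
  have hFu : mderiv (fun x => F x v t) u = -(P * Uτ * P⁻¹) := by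
    have halg : (-(Φτ * U + P * Uτ) * P.adjugate + -Φτ * (P * U).adjugate)
        = -(P * Uτ * P⁻¹) := by
      rw [Matrix.adjugate_mul_distrib, hadjU, ← hPinv]
      noncomm_ring
    ext i j
    simp only [mderiv, Matrix.of_apply]
    rw [(hFuentry i j).deriv, halg]
  have hFv : mderiv (fun y => F u y t) v = -(P * Vτ * P⁻¹) := by
    have halg : (-(Φτ * V + P * Vτ) * P.adjugate + -Φτ * (P * V).adjugate)
        = -(P * Vτ * P⁻¹) := by
      rw [Matrix.adjugate_mul_distrib, hadjV, ← hPinv]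
      noncomm_ring
    ext i j
    simp only [mderiv, Matrix.of_apply]
    rw [(hFventry i j).deriv, halg]
  -- trace of F vanishes (constancy of the determinant)
  have htr0 : (Φτ * P.adjugate).trace = 0 := by
    have h1 : HasDerivAt (fun s => Φ u v s 0 0 * Φ u v s 1 1 - Φ u v s 0 1 * Φ u v s 1 0)
        (Φτ 0 0 * P 1 1 + P 0 0 * Φτ 1 1 - (Φτ 0 1 * P 1 0 + P 0 1 * Φτ 1 0)) t :=
      ((hAs 0 0).mul (hAs 1 1)).sub ((hAs 0 1).mul (hAs 1 0))
    have h2 : HasDerivAt (fun s => (Φ u v s).det)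
        (Φτ 0 0 * P 1 1 + P 0 0 * Φτ 1 1 - (Φτ 0 1 * P 1 0 + P 0 1 * Φτ 1 0)) t :=
      h1.congr_of_eventuallyEq (Eventually.of_forall fun s => Matrix.det_fin_two _)
    have h3 : HasDerivAt (fun s => (Φ u v s).det) 0 t :=
      (hasDerivAt_const t (1 : ℝ)).congr_of_eventuallyEq
        ((hTopen.eventually_mem ht).mono fun s hs => hΦdet u hu v hv s hs)
    have h4 := h3.unique h2
    have h5 : (Φτ * P.adjugate).trace
        = Φτ 0 0 * P 1 1 - Φτ 0 1 * P 1 0 - Φτ 1 0 * P 0 1 + Φτ 1 1 * P 0 0 := by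
      rw [Matrix.adjugate_fin_two P]
      simp [Matrix.trace_fin_two, Matrix.mul_apply, Fin.sum_univ_two]
      ring
    rw [h5]
    linear_combination -h4
  have hPinvP : P⁻¹ * P = 1 := Matrix.nonsing_inv_mul P hPunit
  have hconj : ∀ A B : Matrix (Fin 2) (Fin 2) ℝ,
      (P * A * P⁻¹ * (P * B * P⁻¹)).trace = (A * B).trace := by
    intro A B
    have h1 : P * A * P⁻¹ * (P * B * P⁻¹) = P * (A * B) * P⁻¹ := by
      simp only [Matrix.mul_assoc]
      rw [← Matrix.mul_assoc P⁻¹ P (B * P⁻¹), hPinvP, Matrix.one_mul]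
    rw [h1, Matrix.trace_mul_comm (P * (A * B)) P⁻¹, ← Matrix.mul_assoc, hPinvP,
      Matrix.one_mul]
  refine ⟨?_, ?_, ?_, ?_, ?_, ?_, ?_⟩
  · rw [hF u v t, ← hPdef, ← hΦτdef, hPinv, Matrix.neg_mul, Matrix.trace_neg, htr0, neg_zero]
  · rw [hFu]
    simp only [form1]
    rw [neg_mul_neg, hconj Uτ Uτ]
    simp [hUτdef, Matrix.trace_fin_two, Matrix.mul_apply, Fin.sum_univ_two]
  · rw [hFv]
    simp only [form1]
    rw [neg_mul_neg, hconj Vτ Vτ]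
    simp [hVτdef, Matrix.trace_fin_two, Matrix.mul_apply, Fin.sum_univ_two]
  · rw [hFu, hFv]
    simp only [form1]
    rw [neg_mul_neg, hconj Uτ Vτ]
    have htr : (Uτ * Vτ).trace
        = H u v / 2 * lamτ * Real.exp (ω u v / 2)
          * (-(H u v / 2) * muτ * Real.exp (ω u v / 2)) := by
      simp [hUτdef, hVτdef, Matrix.trace_fin_two, Matrix.mul_apply, Fin.sum_univ_two]
    rw [htr, hH u v, hlamτdef, hmuτdef]
    rw [show Real.exp (ω u v) = Real.exp (ω u v / 2) * Real.exp (ω u v / 2) by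
      rw [← Real.exp_add]; ring_nf]
    field_simp
  · rw [hN u v t, ← hPdef]
    simp only [form1]
    rw [hconj kmat kmat]
    simp [kmat, Matrix.trace_fin_two, Matrix.mul_apply, Fin.sum_univ_two]
    norm_num
  · rw [hFu, hN u v t, ← hPdef]
    simp only [form1]
    rw [Matrix.neg_mul, Matrix.trace_neg, hconj Uτ kmat]
    simp [hUτdef, kmat, Matrix.trace_fin_two, Matrix.mul_apply, Fin.sum_univ_two]
  · rw [hFv, hN u v t, ← hPdef]
    simp only [form1]
    rw [Matrix.neg_mul, Matrix.trace_neg, hconj Vτ kmat]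
    simp [hVτdef, kmat, Matrix.trace_fin_two, Matrix.mul_apply, Fin.sum_univ_two]
end
end

section
/- Let ε ∈ {−1, 1}, ϑ ∈ ℝ with ϑ ≠ 0, let I, J ⊆ ℝ be open intervals, D = I × J, and let ω, q : D → ℝ be smooth and g : J → ℝ be smooth with g and g′ nowhere zero. Suppose that H(u,v) = 1/g(v), Q = (q + ϑ)/2, R = ε(q − ϑ)/2 satisfy the Gauss equation (G₀) and the Codazzi equations (C₀) on D. Then: (i) ω_uv = 0 on D (the surface is flat); (ii) ε(q² − ϑ²) > 0 on D (real distinct principal curvatures); (iii) q is independent of v; and (iv) there exist C ∈ ℝ∖{0}, α ∈ ℝ∖{0}, β ∈ ℝ such that g(v) = C e^{αv} on J, and moreover if ε = 1 then q(u,v) = μ ϑ cosh(αu + β) for some μ ∈ {−1, 1}, while if ε = −1 then q(u,v) = ϑ sin(αu + β). -/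
noncomputable section

private lemma const_on_of_hasDerivAt_zero {s : Set ℝ} (hs : IsOpen s) (hc : Convex ℝ s)
    {f : ℝ → ℝ} (hf : ∀ x ∈ s, HasDerivAt f 0 x) {x y : ℝ} (hx : x ∈ s) (hy : y ∈ s) :
    f x = f y := by
  refine hc.is_const_of_fderivWithin_eq_zero
    (fun z hz => (hf z hz).differentiableAt.differentiableWithinAt) (fun z hz => ?_) hx hy
  have h0 : HasFDerivAt f (0 : ℝ →L[ℝ] ℝ) z := by
    exact hasFDerivAt_iff_hasDerivAt.mpr (by simpa using hf z hz)
  rw [fderivWithin_of_isOpen hs hz, h0.fderiv]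

private lemma deriv_congr_on {s : Set ℝ} (hs : IsOpen s) {f g : ℝ → ℝ} {x : ℝ}
    (hx : x ∈ s) (h : ∀ y ∈ s, f y = g y) : deriv f x = deriv g x :=
  Filter.EventuallyEq.deriv_eq (Filter.eventuallyEq_of_mem (hs.mem_nhds hx) h)

set_option maxHeartbeats 1600000 in
/-- Theorem 5.4: an `(ε,ϑ)`-isothermic timelike surface (`ϑ ≠ 0`,
`Q = (q+ϑ)/2`, `R = ε(q−ϑ)/2`) with Lorentz anti-holomorphic inverse mean curvature
`1/H = g(v)` is flat, has real distinct principal curvatures, `q` depends only on `u`,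
and `g(v) = Ce^{αv}` with `q = μϑcosh(αu+β)` if `ε = 1`, `q = ϑsin(αu+β)` if `ε = −1`. -/
theorem statement7
    (ε ϑ : ℝ) (hε : ε = -1 ∨ ε = 1) (hϑ : ϑ ≠ 0)
    (I J : Set ℝ)
    (hIopen : IsOpen I) (hIint : I.OrdConnected) (hIne : I.Nonempty)
    (hJopen : IsOpen J) (hJint : J.OrdConnected) (hJne : J.Nonempty)
    (ω q : ℝ → ℝ → ℝ) (g : ℝ → ℝ)
    (hω : Smooth2 ω (I ×ˢ J)) (hq : Smooth2 q (I ×ˢ J))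
    (hg : ContDiffOn ℝ (⊤ : ℕ∞) g J)
    (hg0 : ∀ v ∈ J, g v ≠ 0)
    (hg'0 : ∀ v ∈ J, deriv g v ≠ 0)
    (hGauss : ∀ u ∈ I, ∀ v ∈ J,
      GaussEq 0 ω (fun u v => (q u v + ϑ) / 2) (fun u v => ε * (q u v - ϑ) / 2)
        (fun u v => 1 / g v) u v)
    (hCodazzi : ∀ u ∈ I, ∀ v ∈ J,
      CodazziEq ω (fun u v => (q u v + ϑ) / 2) (fun u v => ε * (q u v - ϑ) / 2)
        (fun u v => 1 / g v) u v) :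
    (∀ u ∈ I, ∀ v ∈ J, pd2 (pd1 ω) u v = 0) ∧
    (∀ u ∈ I, ∀ v ∈ J, 0 < ε * ((q u v) ^ 2 - ϑ ^ 2)) ∧
    (∀ u ∈ I, ∀ v ∈ J, ∀ v' ∈ J, q u v = q u v') ∧
    (∃ C α β : ℝ, C ≠ 0 ∧ α ≠ 0 ∧
      (∀ v ∈ J, g v = C * Real.exp (α * v)) ∧
      (ε = 1 → ∃ μ : ℝ, (μ = -1 ∨ μ = 1) ∧
        ∀ u ∈ I, ∀ v ∈ J, q u v = μ * ϑ * Real.cosh (α * u + β)) ∧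
      (ε = -1 → ∀ u ∈ I, ∀ v ∈ J, q u v = ϑ * Real.sin (α * u + β))) := by
  obtain ⟨u₀, hu₀⟩ := hIne
  obtain ⟨v₀, hv₀⟩ := hJne
  have hIconv : Convex ℝ I := convex_iff_ordConnected.mpr hIint
  have hJconv : Convex ℝ J := convex_iff_ordConnected.mpr hJint
  have hD : IsOpen (I ×ˢ J) := hIopen.prod hJopen
  have hε2 : ε ^ 2 = 1 := by rcases hε with h | h <;> simp [h]
  have hεne : ε ≠ 0 := by rcases hε with h | h <;> simp [h]
  -- differentiability of g
  have hone : (1 : WithTop ℕ∞) ≤ ((⊤ : ℕ∞) : WithTop ℕ∞) := by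
    exact_mod_cast (le_top : (1:ℕ∞) ≤ ⊤)
  have htop1 : ((⊤:ℕ∞) : WithTop ℕ∞) + 1 ≤ ((⊤:ℕ∞) : WithTop ℕ∞) := by
    exact_mod_cast (le_top : (⊤:ℕ∞)+1 ≤ ⊤)
  have hgd : ∀ v ∈ J, HasDerivAt g (deriv g v) v := fun v hv =>
    ((hg.contDiffAt (hJopen.mem_nhds hv)).differentiableAt (by simp)).hasDerivAt
  -- v-slices of q
  have hqv : ∀ u ∈ I, ∀ v ∈ J, HasDerivAt (fun y => q u y) (pd2 q u v) v := by
    intro u hu v hv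
    exact (((hq.contDiffAt (hD.mem_nhds (show (u, v) ∈ I ×ˢ J from ⟨hu, hv⟩))).comp v
      (ContDiffAt.prodMk (contDiffAt_const (c := u)) contDiffAt_id)).differentiableAt (by simp)).hasDerivAt
  -- Step 1 : pd2 q = 0
  have hq2 : ∀ u ∈ I, ∀ v ∈ J, pd2 q u v = 0 := by
    intro u hu v hv
    have hc := (hCodazzi u hu v hv).1
    have h1 : pd1 (fun _ v => 1 / g v) u v = 0 := by simp [pd1]
    have h2 : pd2 (fun u v => (q u v + ϑ) / 2) u v = pd2 q u v / 2 := by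
      have h := ((hqv u hu v hv).add_const ϑ).div_const 2
      simpa [pd2] using h.deriv
    rw [h1, h2] at hc
    have hexp := Real.exp_pos (-ω u v)
    have hz : Real.exp (-ω u v) * pd2 q u v = 0 := by linear_combination -hc
    rcases mul_eq_zero.mp hz with h | h
    · exact absurd h hexp.ne'
    · exact h
  -- (iii)
  have hqconst : ∀ u ∈ I, ∀ v ∈ J, ∀ v' ∈ J, q u v = q u v' := by
    intro u hu v hv v' hv'
    exact const_on_of_hasDerivAt_zero hJopen hJconv
      (fun y hy => hq2 u hu y hy ▸ hqv u hu y hy) hv hv'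
  -- Φ and its derivatives
  set Φ : ℝ → ℝ := fun u => q u v₀ with hΦdef
  have hΦcd : ContDiffOn ℝ (⊤:ℕ∞) Φ I := by
    exact hq.comp (contDiffOn_id.prodMk (contDiffOn_const (c := v₀)))
      (fun x hx => Set.mem_prod.mpr ⟨hx, hv₀⟩)
  have hqΦ : ∀ u ∈ I, ∀ v ∈ J, q u v = Φ u := fun u hu v hv => hqconst u hu v hv v₀ hv₀
  set Φ' : ℝ → ℝ := deriv Φ with hΦ'def
  have hΦ'cd : ContDiffOn ℝ (⊤:ℕ∞) Φ' I := hΦcd.deriv_of_isOpen hIopen htop1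
  have hΦd : ∀ u ∈ I, HasDerivAt Φ (Φ' u) u := fun u hu =>
    ((hΦcd.contDiffAt (hIopen.mem_nhds hu)).differentiableAt (by simp)).hasDerivAt
  set Φ'' : ℝ → ℝ := deriv Φ' with hΦ''def
  have hΦ'd : ∀ u ∈ I, HasDerivAt Φ' (Φ'' u) u := fun u hu =>
    ((hΦ'cd.contDiffAt (hIopen.mem_nhds hu)).differentiableAt (by simp)).hasDerivAt
  -- u-slices of q
  have hqx : ∀ u ∈ I, ∀ v ∈ J, HasDerivAt (fun x => q x v) (Φ' u) u := by
    intro u hu v hv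
    refine HasDerivAt.congr_of_eventuallyEq (hΦd u hu) ?_
    exact Filter.eventuallyEq_of_mem (hIopen.mem_nhds hu) (fun x hx => hqΦ x hx v hv)
  -- Step 3 : second Codazzi equation
  have hE2 : ∀ u ∈ I, ∀ v ∈ J,
      (0 * g v - 1 * deriv g v) / (g v) ^ 2 = ε * Real.exp (-ω u v) * Φ' u := by
    intro u hu v hv
    have hc := (hCodazzi u hu v hv).2
    have h1 : pd2 (fun _ v => 1 / g v) u v = (0 * g v - 1 * deriv g v) / (g v) ^ 2 := by
      have h := (hgd v hv).inv (hg0 v hv)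
      simp only [pd2, one_div]; exact h.deriv.trans (by ring)
    have h2 : pd1 (fun u v => ε * (q u v - ϑ) / 2) u v = ε * Φ' u / 2 := by
      have h := (((hqx u hu v hv).sub_const ϑ).const_mul ε).div_const 2
      simpa [pd1] using h.deriv
    rw [h1, h2] at hc
    rw [hc]; ring
  have hΦ'ne : ∀ u ∈ I, Φ' u ≠ 0 := by
    intro u hu h0
    have h := hE2 u hu v₀ hv₀
    rw [h0, mul_zero] at h
    rw [div_eq_zero_iff] at h
    rcases h with h | h
    · exact hg'0 v₀ hv₀ (by linarith)
    · exact hg0 v₀ hv₀ (pow_eq_zero_iff (by norm_num)|>.mp h)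
  have hexpω : ∀ u ∈ I, ∀ v ∈ J,
      Real.exp (ω u v) * deriv g v = -ε * Φ' u * (g v) ^ 2 := by
    intro u hu v hv
    have h := hE2 u hu v hv
    rw [Real.exp_neg] at h
    have hX : Real.exp (ω u v) ≠ 0 := (Real.exp_pos _).ne'
    have hg2 : (g v) ^ 2 ≠ 0 := pow_ne_zero _ (hg0 v hv)
    rw [div_eq_iff hg2] at h
    have h' : Real.exp (ω u v) * (0 * g v - 1 * deriv g v) = ε * Φ' u * g v ^ 2 := by
      rw [h, show ε * (Real.exp (ω u v))⁻¹ * Φ' u * g v ^ 2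
        = (Real.exp (ω u v))⁻¹ * (ε * Φ' u * g v ^ 2) by ring, mul_inv_cancel_left₀ hX]
    linear_combination -h'
  -- the product structure of exp ω
  set φ : ℝ → ℝ := fun u => -ε * Φ' u with hφdef
  set ψ : ℝ → ℝ := fun v => (g v) ^ 2 / deriv g v with hψdef
  have hφne : ∀ u ∈ I, φ u ≠ 0 := fun u hu =>
    mul_ne_zero (neg_ne_zero.mpr hεne) (hΦ'ne u hu)
  have hψne : ∀ v ∈ J, ψ v ≠ 0 := fun v hv =>
    div_ne_zero (pow_ne_zero _ (hg0 v hv)) (hg'0 v hv)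
  have hexpφψ : ∀ u ∈ I, ∀ v ∈ J, Real.exp (ω u v) = φ u * ψ v := by
    intro u hu v hv
    rw [hφdef, hψdef]
    simp only
    rw [← mul_div_assoc, eq_div_iff (hg'0 v hv)]
    exact hexpω u hu v hv
  set φ' : ℝ → ℝ := fun u => -ε * Φ'' u with hφ'def
  have hφd : ∀ u ∈ I, HasDerivAt φ (φ' u) u := by
    intro u hu
    exact (hΦ'd u hu).const_mul (-ε)
  -- Step 4 : pd1 ω
  have hpd1ω : ∀ u ∈ I, ∀ v ∈ J, pd1 ω u v = φ' u / φ u := by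
    intro u hu v hv
    have hpos : (0:ℝ) < φ u * ψ v := by
      rw [← hexpφψ u hu v hv]; exact Real.exp_pos _
    have hlog : HasDerivAt (fun x => Real.log (φ x * ψ v)) ((φ u * ψ v)⁻¹ * (φ' u * ψ v)) u := by
      have := (Real.hasDerivAt_log hpos.ne').comp u ((hφd u hu).mul_const (ψ v)); exact this
    have heq : (fun x => ω x v) =ᶠ[nhds u] (fun x => Real.log (φ x * ψ v)) :=
      Filter.eventuallyEq_of_mem (hIopen.mem_nhds hu) (fun x hx => by
        rw [← hexpφψ x hx v hv, Real.log_exp])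
    have h1 : pd1 ω u v = (φ u * ψ v)⁻¹ * (φ' u * ψ v) := by
      rw [pd1, heq.deriv_eq]; exact hlog.deriv
    rw [h1]
    field_simp [hφne u hu, hψne v hv]
  -- (i) flatness
  have hflat : ∀ u ∈ I, ∀ v ∈ J, pd2 (pd1 ω) u v = 0 := by
    intro u hu v hv
    have h : deriv (fun y => pd1 ω u y) v = deriv (fun _ : ℝ => φ' u / φ u) v :=
      deriv_congr_on hJopen hv (fun y hy => hpd1ω u hu y hy)
    rw [pd2, h, deriv_const]
  -- Step 5 : Gauss equation
  have hGa : ∀ u ∈ I, ∀ v ∈ J,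
      ε * (Φ u ^ 2 - ϑ ^ 2) * (g v) ^ 2 = (Real.exp (ω u v)) ^ 2 := by
    intro u hu v hv
    have h := hGauss u hu v hv
    simp only [GaussEq] at h
    rw [hflat u hu v hv, hqΦ u hu v hv, Real.exp_neg] at h
    have hX : Real.exp (ω u v) ≠ 0 := (Real.exp_pos _).ne'
    have hgv := hg0 v hv
    field_simp at h
    linear_combination -h
  -- (ii)
  have hreal : ∀ u ∈ I, ∀ v ∈ J, 0 < ε * ((q u v) ^ 2 - ϑ ^ 2) := by
    intro u hu v hv
    rw [hqΦ u hu v hv]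
    have h := hGa u hu v hv
    have hX : (0:ℝ) < Real.exp (ω u v) := Real.exp_pos _
    have hg2 : (0:ℝ) < (g v) ^ 2 :=
      lt_of_le_of_ne (sq_nonneg _) (Ne.symm (pow_ne_zero _ (hg0 v hv)))
    nlinarith [h, hX, hg2]
  -- separation of variables
  have hsep : ∀ u ∈ I, ∀ v ∈ J,
      ε * (Φ u ^ 2 - ϑ ^ 2) * (deriv g v) ^ 2 = (Φ' u) ^ 2 * (g v) ^ 2 := by
    intro u hu v hv
    have h := hGa u hu v hv
    have h2 := hexpω u hu v hv
    -- (exp ω)^2 * (g')^2 = (ε Φ' g²)^2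
    have h3 : (Real.exp (ω u v)) ^ 2 * (deriv g v) ^ 2 = (Φ' u) ^ 2 * (g v) ^ 4 := by
      have := congrArg (fun t => t ^ 2) h2
      calc (Real.exp (ω u v)) ^ 2 * (deriv g v) ^ 2
          = (Real.exp (ω u v) * deriv g v) ^ 2 := by ring
        _ = (-ε * Φ' u * (g v) ^ 2) ^ 2 := by rw [h2]
        _ = ε ^ 2 * ((Φ' u) ^ 2 * (g v) ^ 4) := by ring
        _ = (Φ' u) ^ 2 * (g v) ^ 4 := by rw [hε2]; ring
    have hg2 : (g v) ^ 2 ≠ 0 := pow_ne_zero _ (hg0 v hv)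
    have h4 : (ε * (Φ u ^ 2 - ϑ ^ 2) * (deriv g v) ^ 2) * (g v) ^ 2
        = ((Φ' u) ^ 2 * (g v) ^ 2) * (g v) ^ 2 := by
      calc (ε * (Φ u ^ 2 - ϑ ^ 2) * (deriv g v) ^ 2) * (g v) ^ 2
          = (ε * (Φ u ^ 2 - ϑ ^ 2) * (g v) ^ 2) * (deriv g v) ^ 2 := by ring
        _ = (Real.exp (ω u v)) ^ 2 * (deriv g v) ^ 2 := by rw [h]
        _ = (Φ' u) ^ 2 * (g v) ^ 4 := h3
        _ = ((Φ' u) ^ 2 * (g v) ^ 2) * (g v) ^ 2 := by ring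
    exact mul_right_cancel₀ hg2 h4
  -- Step 6 : the constant α
  set α : ℝ := deriv g v₀ / g v₀ with hαdef
  have hα0 : α ≠ 0 := div_ne_zero (hg'0 v₀ hv₀) (hg0 v₀ hv₀)
  have hP : 0 < ε * (Φ u₀ ^ 2 - ϑ ^ 2) := by
    have h := hreal u₀ hu₀ v₀ hv₀; rwa [hqΦ u₀ hu₀ v₀ hv₀] at h
  have hsq : ∀ v ∈ J, (deriv g v / g v) ^ 2 = α ^ 2 := by
    intro v hv
    have e1 := hsep u₀ hu₀ v hv
    have e2 := hsep u₀ hu₀ v₀ hv₀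
    have h3 : ε * (Φ u₀ ^ 2 - ϑ ^ 2) *
        ((deriv g v) ^ 2 * (g v₀) ^ 2 - (deriv g v₀) ^ 2 * (g v) ^ 2) = 0 := by
      linear_combination (g v₀) ^ 2 * e1 - (g v) ^ 2 * e2
    have h4 := (mul_eq_zero.mp h3).resolve_left hP.ne'
    rw [hαdef]
    have hgv := hg0 v hv
    have hgv0 := hg0 v₀ hv₀
    field_simp
    linear_combination h4
  have hsval : ∀ v ∈ J, deriv g v / g v = α := by
    intro v hv
    have hval : deriv g v / g v = α ∨ deriv g v / g v = -α := by
      have h := hsq v hv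
      have h2 : (deriv g v / g v - α) * (deriv g v / g v + α) = 0 := by
        linear_combination h
      rcases mul_eq_zero.mp h2 with h | h
      · left; linarith
      · right; linarith
    rcases hval with h | h
    · exact h
    · exfalso
      set s : ℝ → ℝ := fun v => deriv g v / g v with hsdef
      have hgcd : ContDiffOn ℝ (⊤:ℕ∞) (deriv g) J := hg.deriv_of_isOpen hJopen htop1
      have hscont : ContinuousOn s J := hgcd.continuousOn.div hg.continuousOn hg0
      have himg : IsPreconnected (s '' J) := hJconv.isPreconnected.image s hscont
      have hmem1 : α ∈ s '' J := ⟨v₀, hv₀, rfl⟩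
      have hmem2 : -α ∈ s '' J := ⟨v, hv, h⟩
      have h0 : (0:ℝ) ∈ s '' J := by
        apply himg.ordConnected.uIcc_subset hmem1 hmem2
        rw [Set.mem_uIcc]
        rcases le_total α 0 with h' | h'
        · left; constructor <;> linarith
        · right; constructor <;> linarith
      obtain ⟨w, hw, hw0⟩ := h0
      exact (div_ne_zero (hg'0 w hw) (hg0 w hw)) hw0
  have hgα : ∀ v ∈ J, deriv g v = α * g v := fun v hv => by
    have h := (div_eq_iff (hg0 v hv)).mp (hsval v hv)
    linarith [h]
  -- Step 7 : g = C exp (α v)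
  set C : ℝ := g v₀ * Real.exp (-(α * v₀)) with hCdef
  have hC0 : C ≠ 0 := mul_ne_zero (hg0 v₀ hv₀) (Real.exp_ne_zero _)
  have hgexp : ∀ v ∈ J, g v = C * Real.exp (α * v) := by
    intro v hv
    have hconst : ∀ x ∈ J, HasDerivAt (fun y => g y * Real.exp (-(α * y))) 0 x := by
      intro x hx
      have hlin : HasDerivAt (fun y : ℝ => -(α * y)) (-α) x := by
        exact ((hasDerivAt_id x).const_mul α).neg.congr_deriv (by ring : -(α * 1) = -α)
      have h1 : HasDerivAt (fun y => Real.exp (-(α * y)))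
          (Real.exp (-(α * x)) * (-α)) x := (Real.hasDerivAt_exp _).comp x hlin
      have h2 := (hgd x hx).mul h1
      refine h2.congr_deriv ?_
      rw [hgα x hx]; ring
    have h2 : g v * Real.exp (-(α * v)) = g v₀ * Real.exp (-(α * v₀)) :=
      const_on_of_hasDerivAt_zero hJopen hJconv hconst hv hv₀
    rw [hCdef]
    have h3 : Real.exp (-(α * v)) * Real.exp (α * v) = 1 := by
      rw [← Real.exp_add]; norm_num
    calc g v = (g v * Real.exp (-(α * v))) * Real.exp (α * v) := by
          rw [mul_assoc, h3, mul_one]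
      _ = g v₀ * Real.exp (-(α * v₀)) * Real.exp (α * v) := by rw [h2]
  -- Step 8 : ODE for Φ
  have hODE1 : ∀ u ∈ I, (Φ' u) ^ 2 = α ^ 2 * (ε * (Φ u ^ 2 - ϑ ^ 2)) := by
    intro u hu
    have h := hsep u hu v₀ hv₀
    rw [hgα v₀ hv₀] at h
    have hg2 : (g v₀) ^ 2 ≠ 0 := pow_ne_zero _ (hg0 v₀ hv₀)
    have h4 : (Φ' u) ^ 2 * (g v₀) ^ 2 = (α ^ 2 * (ε * (Φ u ^ 2 - ϑ ^ 2))) * (g v₀) ^ 2 := by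
      linear_combination -h
    exact mul_right_cancel₀ hg2 h4
  have hODE2 : ∀ u ∈ I, Φ'' u = ε * α ^ 2 * Φ u := by
    intro u hu
    have hF : HasDerivAt (fun y => (Φ' y) ^ 2 - α ^ 2 * (ε * (Φ y ^ 2 - ϑ ^ 2)))
        (2 * Φ' u * Φ'' u - α ^ 2 * (ε * (2 * Φ u * Φ' u))) u := by
      have h1 := (hΦ'd u hu).pow 2
      have h2 := (hΦd u hu).pow 2
      have h3 := ((h2.sub_const (ϑ ^ 2)).const_mul ε).const_mul (α ^ 2)
      have h4 := h1.sub h3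
      refine h4.congr_deriv ?_
      push_cast
      ring
    have hz : deriv (fun y => (Φ' y) ^ 2 - α ^ 2 * (ε * (Φ y ^ 2 - ϑ ^ 2))) u = 0 := by
      have h : deriv (fun y => (Φ' y) ^ 2 - α ^ 2 * (ε * (Φ y ^ 2 - ϑ ^ 2))) u
          = deriv (fun _ : ℝ => (0:ℝ)) u :=
        deriv_congr_on hIopen hu (fun y hy => by rw [hODE1 y hy]; ring)
      rw [h, deriv_const]
    have hval := hF.deriv
    rw [hz] at hval
    have hfac : 2 * Φ' u * (Φ'' u - ε * α ^ 2 * Φ u) = 0 := by linear_combination -hval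
    rcases mul_eq_zero.mp hfac with h | h
    · exact absurd (by linarith : Φ' u = 0) (hΦ'ne u hu)
    · linarith
  refine ⟨hflat, hreal, hqconst, ?_⟩
  -- set up initial data
  set A : ℝ := Φ u₀ with hAdef
  set B : ℝ := Φ' u₀ / α with hBdef
  have hBα : Φ' u₀ = α * B := by rw [hBdef]; field_simp
  rcases hε with hem | hem
  · -- ε = -1 : trigonometric case
    have hAB : A ^ 2 + B ^ 2 = ϑ ^ 2 := by
      have h := hODE1 u₀ hu₀
      rw [hem, hBα] at h
      have h4 : (A ^ 2 + B ^ 2) * α ^ 2 = ϑ ^ 2 * α ^ 2 := by linear_combination h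
      exact mul_right_cancel₀ (pow_ne_zero 2 hα0) h4
    set T : ℝ → ℝ := fun x => A * Real.cos (α * (x - u₀)) + B * Real.sin (α * (x - u₀))
      with hTdef
    set T' : ℝ → ℝ := fun x => α * (B * Real.cos (α * (x - u₀)) - A * Real.sin (α * (x - u₀)))
      with hT'def
    have hlin : ∀ x : ℝ, HasDerivAt (fun y : ℝ => α * (y - u₀)) α x := fun x => by
      simpa using ((hasDerivAt_id x).sub_const u₀).const_mul α
    have hTd : ∀ x : ℝ, HasDerivAt T (T' x) x := by
      intro x
      have hc := (Real.hasDerivAt_cos (α * (x - u₀))).comp x (hlin x)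
      have hs := (Real.hasDerivAt_sin (α * (x - u₀))).comp x (hlin x)
      have h := (hc.const_mul A).add (hs.const_mul B)
      refine h.congr_deriv ?_
      rw [hT'def]; ring
    have hT'd : ∀ x : ℝ, HasDerivAt T' (-(α ^ 2) * T x) x := by
      intro x
      have hc := (Real.hasDerivAt_cos (α * (x - u₀))).comp x (hlin x)
      have hs := (Real.hasDerivAt_sin (α * (x - u₀))).comp x (hlin x)
      have h := ((hc.const_mul B).sub (hs.const_mul A)).const_mul α
      refine h.congr_deriv ?_
      rw [hTdef]; simp only; ring
    have hΦT : ∀ x ∈ I, Φ x = T x := by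
      have hEd : ∀ x ∈ I, HasDerivAt
          (fun y => (Φ' y - T' y) ^ 2 + α ^ 2 * (Φ y - T y) ^ 2) 0 x := by
        intro x hx
        have h1 := ((hΦ'd x hx).sub (hT'd x)).pow 2
        have h2 := (((hΦd x hx).sub (hTd x)).pow 2).const_mul (α ^ 2)
        have h3 := h1.add h2
        refine h3.congr_deriv ?_
        push_cast
        rw [hODE2 x hx, hem]
        simp only [Pi.sub_apply]
        ring
      intro x hx
      have h1 := const_on_of_hasDerivAt_zero hIopen hIconv hEd hx hu₀
      have hT0 : T u₀ = A := by rw [hTdef]; simp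
      have hT'0 : T' u₀ = α * B := by rw [hT'def]; simp
      rw [hT0, hT'0, ← hAdef, hBα] at h1
      have hα2 : 0 < α ^ 2 := lt_of_le_of_ne (sq_nonneg α) (Ne.symm (pow_ne_zero 2 hα0))
      have h0 : (Φ' x - T' x) ^ 2 + α ^ 2 * (Φ x - T x) ^ 2 = 0 := by rw [h1]; ring
      have h2 : (Φ x - T x) ^ 2 = 0 := by
        nlinarith [sq_nonneg (Φ' x - T' x), sq_nonneg (Φ x - T x), h0, hα2]
      have h3 := pow_eq_zero_iff (n := 2) (by norm_num) |>.mp h2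
      linarith
    have hϑ2 : (0:ℝ) < ϑ ^ 2 := lt_of_le_of_ne (sq_nonneg ϑ) (Ne.symm (pow_ne_zero 2 hϑ))
    have hB2' : B ^ 2 ≤ ϑ ^ 2 := by nlinarith [sq_nonneg A]
    have hBϑ : (B / ϑ) ^ 2 ≤ 1 := by
      rw [div_pow]
      exact (div_le_one hϑ2).mpr hB2'
    have hB1 : -1 ≤ B / ϑ := by nlinarith [sq_nonneg (B / ϑ + 1)]
    have hB2 : B / ϑ ≤ 1 := by nlinarith [sq_nonneg (B / ϑ - 1)]
    have hsq1 : 1 - (B / ϑ) ^ 2 = (A / ϑ) ^ 2 := by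
      field_simp
      linear_combination -hAB
    set β₁ : ℝ := if 0 ≤ A / ϑ then Real.arccos (B / ϑ) else -Real.arccos (B / ϑ) with hβ₁def
    have hcos : Real.cos β₁ = B / ϑ := by
      rw [hβ₁def]; split_ifs
      · exact Real.cos_arccos hB1 hB2
      · rw [Real.cos_neg]; exact Real.cos_arccos hB1 hB2
    have hsin : Real.sin β₁ = A / ϑ := by
      rw [hβ₁def]; split_ifs with h
      · rw [Real.sin_arccos, hsq1, Real.sqrt_sq_eq_abs, abs_of_nonneg h]
      · rw [Real.sin_neg, Real.sin_arccos, hsq1, Real.sqrt_sq_eq_abs,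
          abs_of_neg (not_le.mp h)]
        ring
    refine ⟨C, α, β₁ - α * u₀, hC0, hα0, hgexp, ?_, ?_⟩
    · intro h1; rw [hem] at h1; norm_num at h1
    · intro _ u hu v hv
      rw [hqΦ u hu v hv, hΦT u hu, hTdef]
      simp only
      rw [show α * u + (β₁ - α * u₀) = α * (u - u₀) + β₁ by ring, Real.sin_add, hcos, hsin]
      field_simp
      ring
  · -- ε = 1 : hyperbolic case
    have hAB : A ^ 2 - B ^ 2 = ϑ ^ 2 := by
      have h := hODE1 u₀ hu₀
      rw [hem, hBα] at h
      have h4 : (A ^ 2 - B ^ 2) * α ^ 2 = ϑ ^ 2 * α ^ 2 := by linear_combination -h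
      exact mul_right_cancel₀ (pow_ne_zero 2 hα0) h4
    set T : ℝ → ℝ := fun x => A * Real.cosh (α * (x - u₀)) + B * Real.sinh (α * (x - u₀))
      with hTdef
    set T' : ℝ → ℝ := fun x => α * (A * Real.sinh (α * (x - u₀)) + B * Real.cosh (α * (x - u₀)))
      with hT'def
    have hlin : ∀ x : ℝ, HasDerivAt (fun y : ℝ => α * (y - u₀)) α x := fun x => by
      simpa using ((hasDerivAt_id x).sub_const u₀).const_mul α
    have hTd : ∀ x : ℝ, HasDerivAt T (T' x) x := by
      intro x
      have hc := (Real.hasDerivAt_cosh (α * (x - u₀))).comp x (hlin x)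
      have hs := (Real.hasDerivAt_sinh (α * (x - u₀))).comp x (hlin x)
      have h := (hc.const_mul A).add (hs.const_mul B)
      refine h.congr_deriv ?_
      rw [hT'def]; ring
    have hT'd : ∀ x : ℝ, HasDerivAt T' (α ^ 2 * T x) x := by
      intro x
      have hc := (Real.hasDerivAt_cosh (α * (x - u₀))).comp x (hlin x)
      have hs := (Real.hasDerivAt_sinh (α * (x - u₀))).comp x (hlin x)
      have h := ((hs.const_mul A).add (hc.const_mul B)).const_mul α
      refine h.congr_deriv ?_
      rw [hTdef]; simp only; ring
    have hkey : ∀ x ∈ I, Φ' x - T' x - α * (Φ x - T x) = 0 := by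
      have hP0 : ∀ x ∈ I, HasDerivAt
          (fun y => (Φ' y - T' y - α * (Φ y - T y)) * Real.exp (α * y)) 0 x := by
        intro x hx
        have hF : HasDerivAt (fun y => Φ' y - T' y - α * (Φ y - T y))
            ((α ^ 2 * Φ x - α ^ 2 * T x) - α * (Φ' x - T' x)) x := by
          have h := ((hΦ'd x hx).sub (hT'd x)).sub (((hΦd x hx).sub (hTd x)).const_mul α)
          refine h.congr_deriv ?_
          rw [hODE2 x hx, hem]; ring
        have hE : HasDerivAt (fun y => Real.exp (α * y)) (Real.exp (α * x) * α) x :=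
          (Real.hasDerivAt_exp _).comp x (by simpa using (hasDerivAt_id x).const_mul α)
        have h := hF.mul hE
        refine h.congr_deriv ?_
        ring
      intro x hx
      have h1 := const_on_of_hasDerivAt_zero hIopen hIconv hP0 hx hu₀
      have hT0 : T u₀ = A := by rw [hTdef]; simp
      have hT'0 : T' u₀ = α * B := by rw [hT'def]; simp
      rw [hT0, hT'0, ← hAdef, hBα] at h1
      have h2 : (Φ' x - T' x - α * (Φ x - T x)) * Real.exp (α * x) = 0 := by
        rw [h1]; ring
      exact (mul_eq_zero.mp h2).resolve_right (Real.exp_ne_zero _)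
    have hΦT : ∀ x ∈ I, Φ x = T x := by
      have hr : ∀ y ∈ I, HasDerivAt (fun z => (Φ z - T z) * Real.exp (-(α * z))) 0 y := by
        intro y hy
        have hE : HasDerivAt (fun z => Real.exp (-(α * z))) (Real.exp (-(α * y)) * (-α)) y :=
          (Real.hasDerivAt_exp _).comp y (by exact ((hasDerivAt_id y).const_mul α).neg.congr_deriv (by ring : -(α * 1) = -α))
        have h1 := ((hΦd y hy).sub (hTd y)).mul hE
        refine h1.congr_deriv ?_
        have h2 := hkey y hy
        have h3 : Φ' y - T' y = α * (Φ y - T y) := by linarith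
        rw [h3]; simp only [Pi.sub_apply]; ring
      intro x hx
      have h1 := const_on_of_hasDerivAt_zero hIopen hIconv hr hx hu₀
      have hT0 : T u₀ = A := by rw [hTdef]; simp
      rw [hT0, ← hAdef, sub_self, zero_mul] at h1
      have h2 := (mul_eq_zero.mp h1).resolve_right (Real.exp_ne_zero _)
      linarith
    have hϑ2 : (0:ℝ) < ϑ ^ 2 := lt_of_le_of_ne (sq_nonneg ϑ) (Ne.symm (pow_ne_zero 2 hϑ))
    have hAne : A ≠ 0 := by
      intro h0
      rw [h0] at hAB
      nlinarith [sq_nonneg B]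
    set μ : ℝ := if 0 < A * ϑ then (1:ℝ) else -1 with hμdef
    have hμ2 : μ ^ 2 = 1 := by rw [hμdef]; split_ifs <;> norm_num
    have hμϑ : μ * ϑ ≠ 0 := by
      rw [hμdef]; split_ifs <;> simp [hϑ]
    have hpos : 0 < A * (μ * ϑ) := by
      rw [hμdef]; split_ifs with h
      · simpa using h
      · have h1 : A * ϑ < 0 := lt_of_le_of_ne (not_lt.mp h) (mul_ne_zero hAne hϑ)
        nlinarith [h1]
    have hdiv : 0 < A / (μ * ϑ) := by
      rcases mul_pos_iff.mp hpos with ⟨h1, h2⟩ | ⟨h1, h2⟩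
      · exact div_pos h1 h2
      · exact div_pos_of_neg_of_neg h1 h2
    set β₀ : ℝ := Real.arsinh (B / (μ * ϑ)) with hβ₀def
    have hsinh : Real.sinh β₀ = B / (μ * ϑ) := Real.sinh_arsinh _
    have hcosh : Real.cosh β₀ = A / (μ * ϑ) := by
      rw [hβ₀def, Real.cosh_arsinh]
      have h1 : 1 + (B / (μ * ϑ)) ^ 2 = (A / (μ * ϑ)) ^ 2 := by
        clear_value T T' β₀ μ A B
        have hd : (μ * ϑ) ^ 2 = ϑ ^ 2 := by rw [mul_pow, hμ2, one_mul]
        rw [div_pow, div_pow, hd, eq_div_iff hϑ2.ne', add_mul, div_mul_cancel₀ _ hϑ2.ne']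
        linear_combination -hAB
      rw [h1, Real.sqrt_sq hdiv.le]
    refine ⟨C, α, β₀ - α * u₀, hC0, hα0, hgexp, ?_, ?_⟩
    · intro _
      refine ⟨μ, by rw [hμdef]; split_ifs <;> norm_num, ?_⟩
      intro u hu v hv
      rw [hqΦ u hu v hv, hΦT u hu, hTdef]
      simp only
      rw [show α * u + (β₀ - α * u₀) = α * (u - u₀) + β₀ by ring, Real.cosh_add, hcosh, hsinh]
      field_simp
      linear_combination (-(A * Real.cosh (α * (u - u₀))) - B * Real.sinh (α * (u - u₀))) *
        mul_inv_cancel₀ (left_ne_zero_of_mul hμϑ)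
    · intro h1; rw [hem] at h1; norm_num at h1
end
end

section
/- Let ε ∈ {−1, 1}, let I, J ⊆ ℝ be open intervals, D = I × J, and let ω, 𝔮 : D → ℝ be smooth and g : J → ℝ be smooth with g and g′ nowhere zero. Suppose that H(u,v) = 1/g(v), Q = 𝔮/2, R = ε𝔮/2 satisfy the Gauss equation (G₀) and the Codazzi equations (C₀) on D. Then ε = 1, ω_uv = 0 on D (the surface is flat and isothermic), 𝔮 is independent of v, and there exist α ∈ ℝ∖{0}, μ ∈ {−1, 1}, C₁, C₂ ∈ ℝ∖{0} with μ C₁ C₂ < 0 such that g(v) = C₁ e^{αv} and 𝔮(u,v) = C₂ e^{μαu}. -/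
noncomputable section

open Set Filter

lemma constOn {s : Set ℝ} (hoc : s.OrdConnected)
    {f : ℝ → ℝ} (hf : ∀ x ∈ s, HasDerivAt f 0 x) {x y : ℝ} (hx : x ∈ s) (hy : y ∈ s) :
    f x = f y := by
  wlog h : x ≤ y generalizing x y
  · exact (this hy hx (le_of_not_ge h)).symm
  have hsub : Icc x y ⊆ s := hoc.out hx hy
  have hcont : ContinuousOn f (Icc x y) :=
    fun z hz => ((hf z (hsub hz)).continuousAt).continuousWithinAt
  have hkey := constant_of_has_deriv_right_zero hcont
    (fun z hz => (hf z (hsub (Ico_subset_Icc_self hz))).hasDerivWithinAt)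
  exact (hkey y (right_mem_Icc.2 h)).symm

lemma odeExp {s : Set ℝ} (hoc : s.OrdConnected)
    {f : ℝ → ℝ} {α : ℝ} (hf : ∀ x ∈ s, HasDerivAt f (α * f x) x)
    {x₀ : ℝ} (h0 : x₀ ∈ s) :
    ∀ x ∈ s, f x = (f x₀ * Real.exp (-(α * x₀))) * Real.exp (α * x) := by
  intro x hx
  have key : ∀ z ∈ s, HasDerivAt (fun t => f t * Real.exp (-(α * t))) 0 z := by
    intro z hz
    have h1 : HasDerivAt (fun t : ℝ => -(α * t)) (-α) z := by
      exact ((hasDerivAt_id z).const_mul α).neg.congr_deriv (by simp)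
    have h2 := h1.exp
    have h3 := (hf z hz).mul h2
    exact h3.congr_deriv (by ring)
  have hc := constOn hoc key hx h0
  have e1 : Real.exp (-(α * x)) * Real.exp (α * x) = 1 := by
    rw [← Real.exp_add]; simp
  calc f x = f x * (Real.exp (-(α * x)) * Real.exp (α * x)) := by rw [e1, mul_one]
    _ = f x * Real.exp (-(α * x)) * Real.exp (α * x) := by ring
    _ = f x₀ * Real.exp (-(α * x₀)) * Real.exp (α * x) := by rw [hc]

lemma signConst {s : Set ℝ} (hoc : s.OrdConnected) {h : ℝ → ℝ} (hc : ContinuousOn h s)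
    {a : ℝ} (ha : a ≠ 0) (hv : ∀ x ∈ s, h x = a ∨ h x = -a)
    {x₀ : ℝ} (h0 : x₀ ∈ s) (h00 : h x₀ = a) : ∀ x ∈ s, h x = a := by
  intro x hx
  rcases hv x hx with h1 | h1
  · exact h1
  exfalso
  have hsub : uIcc x₀ x ⊆ s := hoc.uIcc_subset h0 hx
  have hIVT := intermediate_value_uIcc (hc.mono hsub)
  have h0mem : (0:ℝ) ∈ uIcc (h x₀) (h x) := by
    rw [h00, h1]
    rcases le_or_gt a 0 with h2 | h2
    · exact Set.mem_uIcc.2 (Or.inl ⟨h2, by linarith⟩)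
    · exact Set.mem_uIcc.2 (Or.inr ⟨by linarith, le_of_lt h2⟩)
  obtain ⟨c, hcmem, hc0⟩ := hIVT h0mem
  rcases hv c (hsub hcmem) with h3 | h3
  · rw [h3] at hc0; exact ha hc0
  · rw [h3] at hc0; exact ha (by linarith)

/-- Proposition 5.1: a `±`isothermic timelike surface
(`Q = 𝔮/2`, `R = ε𝔮/2`) with Lorentz anti-holomorphic inverse mean curvature
`1/H = g(v)` (with `g, g′` nowhere zero) satisfies `ε = 1`, is flat,
`𝔮` depends only on `u`, and `g(v) = C₁e^{αv}`, `𝔮 = C₂e^{μαu}` with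
`μ ∈ {−1,1}`, `C₁, C₂ ≠ 0`, `μC₁C₂ < 0`. -/
theorem statement8
    (ε : ℝ) (hε : ε = -1 ∨ ε = 1)
    (I J : Set ℝ)
    (hIopen : IsOpen I) (hIint : I.OrdConnected) (hIne : I.Nonempty)
    (hJopen : IsOpen J) (hJint : J.OrdConnected) (hJne : J.Nonempty)
    (ω q : ℝ → ℝ → ℝ) (g : ℝ → ℝ)
    (hω : Smooth2 ω (I ×ˢ J)) (hq : Smooth2 q (I ×ˢ J))
    (hg : ContDiffOn ℝ (⊤ : ℕ∞) g J)
    (hg0 : ∀ v ∈ J, g v ≠ 0)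
    (hg'0 : ∀ v ∈ J, deriv g v ≠ 0)
    (hGauss : ∀ u ∈ I, ∀ v ∈ J,
      GaussEq 0 ω (fun u v => q u v / 2) (fun u v => ε * q u v / 2)
        (fun u v => 1 / g v) u v)
    (hCodazzi : ∀ u ∈ I, ∀ v ∈ J,
      CodazziEq ω (fun u v => q u v / 2) (fun u v => ε * q u v / 2)
        (fun u v => 1 / g v) u v) :
    ε = 1 ∧
    (∀ u ∈ I, ∀ v ∈ J, pd2 (pd1 ω) u v = 0) ∧
    (∀ u ∈ I, ∀ v ∈ J, ∀ v' ∈ J, q u v = q u v') ∧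
    (∃ α μ C₁ C₂ : ℝ, α ≠ 0 ∧ (μ = -1 ∨ μ = 1) ∧ C₁ ≠ 0 ∧ C₂ ≠ 0 ∧ μ * C₁ * C₂ < 0 ∧
      (∀ v ∈ J, g v = C₁ * Real.exp (α * v)) ∧
      (∀ u ∈ I, ∀ v ∈ J, q u v = C₂ * Real.exp (μ * α * u))) := by
  obtain ⟨u₀, hu₀⟩ := hIne
  obtain ⟨v₀, hv₀⟩ := hJne
  -- slices of q are smooth
  have hq1 : ∀ v ∈ J, ContDiffOn ℝ (⊤ : ℕ∞) (fun x => q x v) I := fun v hv =>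
    hq.comp ((contDiff_id.prodMk contDiff_const).contDiffOn)
      (fun x hx => Set.mk_mem_prod hx hv)
  have hq2 : ∀ u ∈ I, ContDiffOn ℝ (⊤ : ℕ∞) (fun y => q u y) J := fun u hu =>
    hq.comp ((contDiff_const.prodMk contDiff_id).contDiffOn)
      (fun y hy => Set.mk_mem_prod hu hy)
  have hdq1 : ∀ u ∈ I, ∀ v ∈ J,
      HasDerivAt (fun x => q x v) (deriv (fun x => q x v) u) u := by
    intro u hu v hv
    exact (((hq1 v hv).differentiableOn (by simp)).differentiableAt
      (hIopen.mem_nhds hu)).hasDerivAt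
  have hdq2 : ∀ u ∈ I, ∀ v ∈ J,
      HasDerivAt (fun y => q u y) (deriv (fun y => q u y) v) v := by
    intro u hu v hv
    exact (((hq2 u hu).differentiableOn (by simp)).differentiableAt
      (hJopen.mem_nhds hv)).hasDerivAt
  have hdg : ∀ v ∈ J, HasDerivAt g (deriv g v) v := fun v hv =>
    ((hg.differentiableOn (by simp)).differentiableAt (hJopen.mem_nhds hv)).hasDerivAt
  -- Step 1: q is independent of v
  have hqv : ∀ u ∈ I, ∀ v ∈ J, deriv (fun y => q u y) v = 0 := by
    intro u hu v hv
    have h1 := (hCodazzi u hu v hv).1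
    have h2 : pd1 (fun u v => 1 / g v) u v = 0 := by simp [pd1]
    have h3 : pd2 (fun u v => q u v / 2) u v = deriv (fun y => q u y) v / 2 := by
      simp only [pd2]
      exact deriv_div_const 2
    rw [h2, h3] at h1
    have h4 : Real.exp (-ω u v) * deriv (fun y => q u y) v = 0 := by linarith
    rcases mul_eq_zero.1 h4 with h5 | h5
    · exact absurd h5 (Real.exp_ne_zero _)
    · exact h5
  have hqconst : ∀ u ∈ I, ∀ v ∈ J, ∀ v' ∈ J, q u v = q u v' := by
    intro u hu v hv v' hv'
    exact constOn hJint (fun y hy => (hqv u hu y hy) ▸ hdq2 u hu y hy) hv hv'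
  -- pd1 q is independent of v
  have hqu_indep : ∀ u ∈ I, ∀ v ∈ J,
      deriv (fun x => q x v) u = deriv (fun x => q x v₀) u := by
    intro u hu v hv
    apply Filter.EventuallyEq.deriv_eq
    filter_upwards [hIopen.mem_nhds hu] with x hx
    exact hqconst x hx v hv v₀ hv₀
  set qu : ℝ → ℝ := fun x => deriv (fun t => q t v₀) x with hqu_def
  -- Step 2: second Codazzi equation
  have hconj : ∀ u ∈ I, ∀ v ∈ J,
      Real.exp (ω u v) * (-deriv g v / (g v) ^ 2) = ε * qu u := by
    intro u hu v hv
    have h1 := (hCodazzi u hu v hv).2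
    have h2 : pd2 (fun u v => 1 / g v) u v = -deriv g v / (g v) ^ 2 := by
      simp only [pd2, one_div]
      exact ((hdg v hv).inv (hg0 v hv)).deriv
    have h3 : pd1 (fun u v => ε * q u v / 2) u v = ε * qu u / 2 := by
      simp only [pd1]
      rw [deriv_div_const]
      rw [deriv_const_mul ε (hdq1 u hu v hv).differentiableAt]
      rw [hqu_indep u hu v hv]
    rw [h2, h3, Real.exp_neg] at h1
    rw [h1]
    have hE := Real.exp_ne_zero (ω u v)
    field_simp
  have hqu0 : ∀ u ∈ I, qu u ≠ 0 := by
    intro u hu h0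
    have h1 := hconj u hu v₀ hv₀
    rw [h0, mul_zero] at h1
    rcases mul_eq_zero.1 h1 with h5 | h5
    · exact Real.exp_ne_zero _ h5
    · rcases div_eq_zero_iff.1 h5 with h6 | h6
      · exact hg'0 v₀ hv₀ (by linarith)
      · exact hg0 v₀ hv₀ ((pow_eq_zero_iff (two_ne_zero)).1 h6)
  have hkey : ∀ u ∈ I, ∀ v ∈ J,
      Real.exp (ω u v) = (ε * qu u) * (-(g v) ^ 2 / deriv g v) := by
    intro u hu v hv
    have e1 := hconj u hu v hv
    have h1 := hg'0 v hv
    have h2 := hg0 v hv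
    field_simp at e1 ⊢
    linarith [e1]
  -- Step 3: flatness
  have homega : ∀ u ∈ I, ∀ v ∈ J, pd2 (pd1 ω) u v = 0 := by
    intro u hu v hv
    have hstep : ∀ y ∈ J, pd1 ω u y = pd1 ω u v := by
      intro y hy
      have heq : ∀ x ∈ I, ω x y = ω x v + (ω u y - ω u v) := by
        intro x hx
        have e3 : Real.exp (ω x y) * Real.exp (ω u v)
            = Real.exp (ω x v) * Real.exp (ω u y) := by
          rw [hkey x hx y hy, hkey x hx v hv, hkey u hu y hy, hkey u hu v hv]
          ring
        have e5 : Real.exp (ω x y) = Real.exp (ω x v + (ω u y - ω u v)) := by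
          rw [Real.exp_add, Real.exp_sub]
          field_simp
          linarith [e3]
        exact Real.exp_injective e5
      have hev : (fun x => ω x y) =ᶠ[nhds u] (fun x => ω x v + (ω u y - ω u v)) := by
        filter_upwards [hIopen.mem_nhds hu] with x hx using heq x hx
      calc pd1 ω u y = deriv (fun x => ω x v + (ω u y - ω u v)) u := hev.deriv_eq
        _ = pd1 ω u v := deriv_add_const _
    have hev2 : (fun y => pd1 ω u y) =ᶠ[nhds v] (fun _ => pd1 ω u v) := by
      filter_upwards [hJopen.mem_nhds hv] with y hy using hstep y hy
    simp only [pd2]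
    rw [hev2.deriv_eq, deriv_const]
  -- Step 4: Gauss equation consequences
  have hS : ∀ u ∈ I, ∀ v ∈ J,
      Real.exp (ω u v) ^ 2 = ε * (q u v) ^ 2 * (g v) ^ 2 := by
    intro u hu v hv
    have h1 := hGauss u hu v hv
    unfold GaussEq at h1
    rw [homega u hu v hv, Real.exp_neg] at h1
    have hE := Real.exp_ne_zero (ω u v)
    have hgv := hg0 v hv
    field_simp at h1
    nlinarith [h1]
  have hε1 : ε = 1 := by
    rcases hε with h | h
    · exfalso
      have h1 := hS u₀ hu₀ v₀ hv₀
      rw [h] at h1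
      have hE := Real.exp_pos (ω u₀ v₀)
      nlinarith [sq_nonneg (q u₀ v₀ * g v₀)]
    · exact h
  have hq0 : ∀ u ∈ I, ∀ v ∈ J, q u v ≠ 0 := by
    intro u hu v hv h0
    have h1 := hS u hu v hv
    rw [hε1, h0] at h1
    have hE := Real.exp_pos (ω u v)
    nlinarith
  have hS' : ∀ u ∈ I, ∀ v ∈ J,
      (qu u) ^ 2 * (g v) ^ 2 = (q u v) ^ 2 * (deriv g v) ^ 2 := by
    intro u hu v hv
    have h1 := hS u hu v hv
    have h2 := hkey u hu v hv
    rw [hε1, one_mul] at h1 h2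
    rw [h2] at h1
    have h3 := hg'0 v hv
    have h4 := hg0 v hv
    have h5 : (qu u * (-(g v) ^ 2 / deriv g v)) ^ 2 * (deriv g v) ^ 2
        = (q u v) ^ 2 * (g v) ^ 2 * (deriv g v) ^ 2 := by rw [h1]
    have h6 : (g v) ^ 2 ≠ 0 := pow_ne_zero _ h4
    apply mul_right_cancel₀ h6
    field_simp at h5
    linear_combination (g v) ^ 2 * h5
  -- Step 5: g'/g is constant
  set α := deriv g v₀ / g v₀ with hα_def
  have hα0 : α ≠ 0 := div_ne_zero (hg'0 v₀ hv₀) (hg0 v₀ hv₀)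
  have hcontg : ContinuousOn (fun v => deriv g v / g v) J :=
    (hg.continuousOn_deriv_of_isOpen hJopen (mod_cast le_top)).div hg.continuousOn hg0
  have hb2 : (q u₀ v₀) ^ 2 ≠ 0 := pow_ne_zero _ (hq0 u₀ hu₀ v₀ hv₀)
  have hvalsg : ∀ v ∈ J, deriv g v / g v = α ∨ deriv g v / g v = -α := by
    intro v hv
    have e1 := hS' u₀ hu₀ v hv
    rw [hqconst u₀ hu₀ v hv v₀ hv₀] at e1
    have e2 := hS' u₀ hu₀ v₀ hv₀
    have hgv := hg0 v hv
    have hgv0 := hg0 v₀ hv₀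
    have hpoly : (deriv g v * g v₀) ^ 2 = (deriv g v₀ * g v) ^ 2 := by
      apply mul_left_cancel₀ hb2
      linear_combination (g v) ^ 2 * e2 - (g v₀) ^ 2 * e1
    have hsq : (deriv g v / g v) ^ 2 = α ^ 2 := by
      rw [hα_def, div_pow, div_pow,
        div_eq_div_iff (pow_ne_zero _ hgv) (pow_ne_zero _ hgv0)]
      linear_combination hpoly
    have hfac : (deriv g v / g v - α) * (deriv g v / g v + α) = 0 := by
      linear_combination hsq
    rcases mul_eq_zero.1 hfac with h | h
    · left; linarith
    · right; linarith
  have hgg : ∀ v ∈ J, deriv g v / g v = α :=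
    signConst hJint hcontg hα0 hvalsg hv₀ hα_def.symm
  have hgODE : ∀ v ∈ J, HasDerivAt g (α * g v) v := by
    intro v hv
    have h := hdg v hv
    have h2 : deriv g v = α * g v := (div_eq_iff (hg0 v hv)).1 (hgg v hv)
    rwa [h2] at h
  have hgform := odeExp hJint hgODE hv₀
  -- Step 6: q_u/q is constant
  set β := qu u₀ / q u₀ v₀ with hβ_def
  have hβ0 : β ≠ 0 := div_ne_zero (hqu0 u₀ hu₀) (hq0 u₀ hu₀ v₀ hv₀)
  have hβsq : β ^ 2 = α ^ 2 := by
    have e2 := hS' u₀ hu₀ v₀ hv₀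
    rw [hβ_def, hα_def, div_pow, div_pow,
      div_eq_div_iff (pow_ne_zero _ (hq0 u₀ hu₀ v₀ hv₀)) (pow_ne_zero _ (hg0 v₀ hv₀))]
    linear_combination e2
  have hcontq : ContinuousOn (fun u => qu u / q u v₀) I :=
    ((hq1 v₀ hv₀).continuousOn_deriv_of_isOpen hIopen (mod_cast le_top)).div
      (hq1 v₀ hv₀).continuousOn (fun u hu => hq0 u hu v₀ hv₀)
  have hvalsq : ∀ u ∈ I, qu u / q u v₀ = β ∨ qu u / q u v₀ = -β := by
    intro u hu
    have e1 := hS' u hu v₀ hv₀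
    have hsq : (qu u / q u v₀) ^ 2 = β ^ 2 := by
      rw [hβsq, hα_def, div_pow, div_pow,
        div_eq_div_iff (pow_ne_zero _ (hq0 u hu v₀ hv₀)) (pow_ne_zero _ (hg0 v₀ hv₀))]
      linear_combination e1
    have hfac : (qu u / q u v₀ - β) * (qu u / q u v₀ + β) = 0 := by
      linear_combination hsq
    rcases mul_eq_zero.1 hfac with h | h
    · left; linarith
    · right; linarith
  have hqq : ∀ u ∈ I, qu u / q u v₀ = β :=
    signConst hIint hcontq hβ0 hvalsq hu₀ hβ_def.symm
  obtain ⟨μ, hμpm, hβμ⟩ : ∃ μ : ℝ, (μ = -1 ∨ μ = 1) ∧ β = μ * α := by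
    have hfac : (β - α) * (β + α) = 0 := by linear_combination hβsq
    rcases mul_eq_zero.1 hfac with h | h
    · exact ⟨1, Or.inr rfl, by linarith⟩
    · exact ⟨-1, Or.inl rfl, by linarith⟩
  have hquval : ∀ u ∈ I, qu u = μ * α * q u v₀ := by
    intro u hu
    have h3 := (div_eq_iff (hq0 u hu v₀ hv₀)).1 (hqq u hu)
    rw [hβμ] at h3
    linarith [h3]
  have hqODE : ∀ u ∈ I, HasDerivAt (fun x => q x v₀) ((μ * α) * q u v₀) u := by
    intro u hu
    have h := hdq1 u hu v₀ hv₀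
    have h2 : deriv (fun x => q x v₀) u = (μ * α) * q u v₀ := hquval u hu
    rwa [h2] at h
  have hqform := odeExp hIint hqODE hu₀
  -- assemble
  refine ⟨hε1, homega, hqconst,
    α, μ, g v₀ * Real.exp (-(α * v₀)), q u₀ v₀ * Real.exp (-(μ * α * u₀)),
    hα0, hμpm, mul_ne_zero (hg0 v₀ hv₀) (Real.exp_ne_zero _),
    mul_ne_zero (hq0 u₀ hu₀ v₀ hv₀) (Real.exp_ne_zero _), ?_, ?_, ?_⟩
  · -- sign condition
    have hEpos := Real.exp_pos (ω u₀ v₀)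
    have h1 := hkey u₀ hu₀ v₀ hv₀
    rw [hε1, one_mul] at h1
    have h2 : qu u₀ = μ * α * q u₀ v₀ := hquval u₀ hu₀
    have h3 : deriv g v₀ = α * g v₀ := (div_eq_iff (hg0 v₀ hv₀)).1 (hgg v₀ hv₀)
    rw [h2, h3] at h1
    have h4 : Real.exp (ω u₀ v₀) = -(μ * g v₀ * q u₀ v₀) := by
      rw [h1]
      have hgv0 := hg0 v₀ hv₀
      field_simp
    have h5 : μ * g v₀ * q u₀ v₀ < 0 := by linarith
    have h6 : (0:ℝ) < Real.exp (-(α * v₀)) * Real.exp (-(μ * α * u₀)) :=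
      mul_pos (Real.exp_pos _) (Real.exp_pos _)
    have h7 := mul_neg_of_neg_of_pos h5 h6
    calc μ * (g v₀ * Real.exp (-(α * v₀))) * (q u₀ v₀ * Real.exp (-(μ * α * u₀)))
        = μ * g v₀ * q u₀ v₀ *
          (Real.exp (-(α * v₀)) * Real.exp (-(μ * α * u₀))) := by ring
      _ < 0 := h7
  · intro v hv
    exact hgform v hv
  · intro u hu v hv
    rw [hqconst u hu v hv v₀ hv₀]
    exact hqform u hu
end
end

section
/- Let I ⊆ ℝ be an open interval with 0 ∉ I, and let a : I → ℝ be a twice continuously differentiable function satisfying the ordinary differential equation x(a″(x) a(x) + a′(x)²) = a(x)² a′(x) for all x ∈ I. Then there exists a constant c₁ ∈ ℝ such that 6 x a(x) a′(x) = 2 a(x)³ + 3 a(x)² + c₁ for all x ∈ I; equivalently, the function x ↦ x a(x) a′(x) − (2a(x)³ + 3a(x)²)/6 is constant on I, so the equation is solved by quadratures: 12 ∫ a/(2a³ + 3a² + c₁) da = 2 log|x| + c₂. -/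
noncomputable section

/-- Proposition 4.12: the ODE `x(a″a + a′²) = a²a′` for timelike
HIMC surfaces of revolution with null axis admits the first integral
`6xaa′ − (2a³ + 3a²)/... `: there is a constant `c₁` with
`6xaa′ = 2a³ + 3a² + c₁`, so the equation is solved by quadratures. -/
theorem statement12
    (I : Set ℝ) (hIopen : IsOpen I) (hIint : I.OrdConnected) (h0 : (0 : ℝ) ∉ I)
    (a : ℝ → ℝ) (ha : ContDiffOn ℝ 2 a I)
    (hode : ∀ x ∈ I,
      x * (deriv (deriv a) x * a x + (deriv a x) ^ 2) = (a x) ^ 2 * deriv a x) :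
    ∃ c₁ : ℝ, ∀ x ∈ I,
      6 * x * a x * deriv a x = 2 * (a x) ^ 3 + 3 * (a x) ^ 2 + c₁ := by
  rcases Set.eq_empty_or_nonempty I with hI | ⟨x₀, hx₀⟩
  · exact ⟨0, by simp [hI]⟩
  set g : ℝ → ℝ := fun x => 6 * x * a x * deriv a x - (2 * (a x) ^ 3 + 3 * (a x) ^ 2)
    with hg
  have ha' : ContDiffOn ℝ 1 (deriv a) I := ha.deriv_of_isOpen hIopen le_rfl
  have hda : ∀ x ∈ I, HasDerivAt a (deriv a x) x := fun x hx =>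
    ((ha.differentiableOn two_ne_zero x hx).differentiableAt
      (hIopen.mem_nhds hx)).hasDerivAt
  have hda' : ∀ x ∈ I, HasDerivAt (deriv a) (deriv (deriv a) x) x := fun x hx =>
    ((ha'.differentiableOn one_ne_zero x hx).differentiableAt
      (hIopen.mem_nhds hx)).hasDerivAt
  have hgd : ∀ x ∈ I, HasDerivAt g 0 x := by
    intro x hx
    have h1 : HasDerivAt (fun x => 6 * x * a x * deriv a x)
        (6 * a x * deriv a x + 6 * x * (deriv a x * deriv a x)
          + 6 * x * a x * deriv (deriv a) x) x := by
      have := ((((hasDerivAt_id x).const_mul 6).mul (hda x hx)).mul (hda' x hx))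
      refine this.congr_deriv ?_; simp only [id, Pi.mul_apply]; ring
    have h2 : HasDerivAt (fun x => 2 * (a x) ^ 3 + 3 * (a x) ^ 2)
        (6 * (a x) ^ 2 * deriv a x + 6 * a x * deriv a x) x := by
      have := (((hda x hx).pow 3).const_mul 2).add (((hda x hx).pow 2).const_mul 3)
      refine this.congr_deriv ?_; ring
    have := h1.sub h2
    refine this.congr_deriv ?_
    have h3 := hode x hx
    nlinarith [h3]
  have hconst : ∀ x ∈ I, g x = g x₀ := by
    intro x hx
    have hconv : Convex ℝ I := hIint.convex
    refine hconv.is_const_of_fderivWithin_eq_zero (𝕜 := ℝ)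
      (fun y hy => ((hgd y hy).differentiableAt.differentiableWithinAt)) ?_ hx hx₀
    intro y hy
    have : fderivWithin ℝ g I y = fderiv ℝ g y := fderivWithin_of_isOpen hIopen hy
    rw [this, (hgd y hy).hasFDerivAt.fderiv]
    ext t
    simp
  refine ⟨g x₀, fun x hx => ?_⟩
  have := hconst x hx
  simp only [hg] at this ⊢
  linarith
end
end

section
/- Let c ∈ {−1, 1}, let I, J ⊆ ℝ be open intervals, and let f : I → ℝ, g : J → ℝ be smooth. (a) On the open set of D = I × J where 1 − c f(u) g(v) ≠ 0, the function φ(u,v) = (f(u) + g(v))/(1 − c f(u) g(v)) satisfies 1 + cφ² ≠ 0 ⇒ φ_uv − (2cφ/(1 + cφ²)) φ_u φ_v = 0 (in particular it is a solution wherever 1 + cφ² ≠ 0). (b) On the open set where f(u) + g(v) ≠ 0, the function ψ(u,v) = (1 − c f(u) g(v))/(f(u) + g(v)) likewise satisfies ψ_uv − (2cψ/(1 + cψ²)) ψ_u ψ_v = 0 wherever 1 + cψ² ≠ 0. -/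
noncomputable section

lemma alg_phi (c F G d e : ℝ) (hc : c = -1 ∨ c = 1)
    (hden : 1 - c * F * G ≠ 0)
    (hP : 1 + c * ((F + G) / (1 - c * F * G)) ^ 2 ≠ 0) :
    2 * c * d * e * (F + G) / (1 - c * F * G) ^ 3
      - 2 * c * ((F + G) / (1 - c * F * G)) / (1 + c * ((F + G) / (1 - c * F * G)) ^ 2)
        * (d * (1 + c * G ^ 2) / (1 - c * F * G) ^ 2)
        * (e * (1 + c * F ^ 2) / (1 - c * F * G) ^ 2) = 0 := by
  have h2 := pow_ne_zero 2 hden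
  have hfact : 1 + c * ((F + G) / (1 - c * F * G)) ^ 2
      = (1 + c * F ^ 2) * (1 + c * G ^ 2) / (1 - c * F * G) ^ 2 := by
    rw [div_pow, eq_div_iff h2, add_mul, one_mul, mul_div_assoc' c,
      div_mul_cancel₀ _ h2]
    ring
  rw [hfact] at hP ⊢
  have hAB : (1 + c * F ^ 2) * (1 + c * G ^ 2) ≠ 0 := by
    intro h; exact hP (by rw [h]; simp)
  have hA : (1 + c * F ^ 2) ≠ 0 := left_ne_zero_of_mul hAB
  have hB : (1 + c * G ^ 2) ≠ 0 := right_ne_zero_of_mul hAB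
  field_simp
  ring

lemma alg_psi (c F G d e : ℝ) (hc : c = -1 ∨ c = 1)
    (hden : F + G ≠ 0)
    (hP : 1 + c * ((1 - c * F * G) / (F + G)) ^ 2 ≠ 0) :
    2 * d * e * (1 - c * F * G) / (F + G) ^ 3
      - 2 * c * ((1 - c * F * G) / (F + G)) / (1 + c * ((1 - c * F * G) / (F + G)) ^ 2)
        * (-(d * (1 + c * G ^ 2)) / (F + G) ^ 2)
        * (-(e * (1 + c * F ^ 2)) / (F + G) ^ 2) = 0 := by
  have hc2 : c ^ 2 = 1 := by rcases hc with rfl | rfl <;> norm_num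
  have hcne : c ≠ 0 := by rcases hc with rfl | rfl <;> norm_num
  have h2 := pow_ne_zero 2 hden
  have hfact : 1 + c * ((1 - c * F * G) / (F + G)) ^ 2
      = c * ((1 + c * F ^ 2) * (1 + c * G ^ 2)) / (F + G) ^ 2 := by
    rw [div_pow, eq_div_iff h2, add_mul, one_mul, mul_div_assoc' c,
      div_mul_cancel₀ _ h2]
    linear_combination (-(F + G) ^ 2) * hc2
  rw [hfact] at hP ⊢
  have hAB : (1 + c * F ^ 2) * (1 + c * G ^ 2) ≠ 0 := by
    intro h; exact hP (by rw [h]; simp)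
  have hA : (1 + c * F ^ 2) ≠ 0 := left_ne_zero_of_mul hAB
  have hB : (1 + c * G ^ 2) ≠ 0 := right_ne_zero_of_mul hAB
  have key : 2 * c * ((1 - c * F * G) / (F + G)) / (c * ((1 + c * F ^ 2) * (1 + c * G ^ 2)) / (F + G) ^ 2)
        * (-(d * (1 + c * G ^ 2)) / (F + G) ^ 2)
        * (-(e * (1 + c * F ^ 2)) / (F + G) ^ 2)
      = 2 * d * e * (1 - c * F * G) / (F + G) ^ 3 := by
    field_simp
  rw [key, sub_self]

lemma phi_fst (c G : ℝ) (f : ℝ → ℝ) (u d : ℝ)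
    (hf : HasDerivAt f d u) (hden : 1 - c * f u * G ≠ 0) :
    HasDerivAt (fun x => (f x + G) / (1 - c * f x * G))
      (d * (1 + c * G ^ 2) / (1 - c * f u * G) ^ 2) u := by
  have h1 : HasDerivAt (fun x => f x + G) d u := hf.add_const _
  have h2 : HasDerivAt (fun x => 1 - c * f x * G) (-(c * d * G)) u := by
    simpa [mul_comm, mul_assoc, mul_left_comm] using ((hf.const_mul c).mul_const G).const_sub 1
  have h3 := h1.div h2 hden
  rw [show d * (1 - c * f u * G) - (f u + G) * -(c * d * G) = d * (1 + c * G ^ 2) by ring] at h3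
  exact h3

lemma phi_snd (c F : ℝ) (g : ℝ → ℝ) (v e : ℝ)
    (hg : HasDerivAt g e v) (hden : 1 - c * F * g v ≠ 0) :
    HasDerivAt (fun y => (F + g y) / (1 - c * F * g y))
      (e * (1 + c * F ^ 2) / (1 - c * F * g v) ^ 2) v := by
  have h1 : HasDerivAt (fun y => F + g y) e v := hg.const_add _
  have h2 : HasDerivAt (fun y => 1 - c * F * g y) (-(c * F * e)) v := by
    simpa using (hg.const_mul (c * F)).const_sub 1
  have h3 := h1.div h2 hden
  rw [show e * (1 - c * F * g v) - (F + g v) * -(c * F * e) = e * (1 + c * F ^ 2) by ring] at h3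
  exact h3

lemma phi_mixed (c F d : ℝ) (g : ℝ → ℝ) (v e : ℝ)
    (hg : HasDerivAt g e v) (hden : 1 - c * F * g v ≠ 0) :
    HasDerivAt (fun y => d * (1 + c * g y ^ 2) / (1 - c * F * g y) ^ 2)
      (2 * c * d * e * (F + g v) / (1 - c * F * g v) ^ 3) v := by
  have hnum : HasDerivAt (fun y => d * (1 + c * g y ^ 2)) (d * (c * (2 * g v * e))) v := by
    simpa using ((((hg.pow 2).const_mul c).const_add 1).const_mul d)
  have hin : HasDerivAt (fun y => 1 - c * F * g y) (-(c * F * e)) v := by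
    simpa using (hg.const_mul (c * F)).const_sub 1
  have hden2 : HasDerivAt (fun y => (1 - c * F * g y) ^ 2)
      (2 * (1 - c * F * g v) ^ 1 * -(c * F * e)) v := hin.pow 2
  have h3 := hnum.div hden2 (pow_ne_zero 2 hden)
  refine h3.congr_deriv ?_
  field_simp
  ring

lemma psi_fst (c G : ℝ) (f : ℝ → ℝ) (u d : ℝ)
    (hf : HasDerivAt f d u) (hden : f u + G ≠ 0) :
    HasDerivAt (fun x => (1 - c * f x * G) / (f x + G))
      (-(d * (1 + c * G ^ 2)) / (f u + G) ^ 2) u := by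
  have h1 : HasDerivAt (fun x => 1 - c * f x * G) (-(c * d * G)) u := by
    simpa [mul_comm, mul_assoc, mul_left_comm] using ((hf.const_mul c).mul_const G).const_sub 1
  have h2 : HasDerivAt (fun x => f x + G) d u := hf.add_const _
  have h3 := h1.div h2 hden
  rw [show -(c * d * G) * (f u + G) - (1 - c * f u * G) * d = -(d * (1 + c * G ^ 2)) by ring] at h3
  exact h3

lemma psi_snd (c F : ℝ) (g : ℝ → ℝ) (v e : ℝ)
    (hg : HasDerivAt g e v) (hden : F + g v ≠ 0) :
    HasDerivAt (fun y => (1 - c * F * g y) / (F + g y))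
      (-(e * (1 + c * F ^ 2)) / (F + g v) ^ 2) v := by
  have h1 : HasDerivAt (fun y => 1 - c * F * g y) (-(c * F * e)) v := by
    simpa using (hg.const_mul (c * F)).const_sub 1
  have h2 : HasDerivAt (fun y => F + g y) e v := hg.const_add _
  have h3 := h1.div h2 hden
  rw [show -(c * F * e) * (F + g v) - (1 - c * F * g v) * e = -(e * (1 + c * F ^ 2)) by ring] at h3
  exact h3

lemma psi_mixed (c F d : ℝ) (g : ℝ → ℝ) (v e : ℝ)
    (hg : HasDerivAt g e v) (hden : F + g v ≠ 0) :
    HasDerivAt (fun y => -(d * (1 + c * g y ^ 2)) / (F + g y) ^ 2)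
      (2 * d * e * (1 - c * F * g v) / (F + g v) ^ 3) v := by
  have hnum : HasDerivAt (fun y => -(d * (1 + c * g y ^ 2))) (-(d * (c * (2 * g v * e)))) v := by
    have h0 : HasDerivAt (fun y => d * (1 + c * g y ^ 2)) (d * (c * (2 * g v * e))) v := by
      simpa using ((((hg.pow 2).const_mul c).const_add 1).const_mul d)
    exact h0.neg
  have hden2 : HasDerivAt (fun y => (F + g y) ^ 2) (2 * (F + g v) ^ 1 * e) v :=
    (hg.const_add F).pow 2
  have h3 := hnum.div hden2 (pow_ne_zero 2 hden)
  refine h3.congr_deriv ?_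
  field_simp
  ring


/-- Proposition 6.2, verification half of the nonlinear d'Alembert
formula: for `c = ±1`, both `φ = (f + g)/(1 − cfg)` and `ψ = (1 − cfg)/(f + g)` solve
the harmonic map equation `φ_uv − (2cφ/(1 + cφ²))φ_uφ_v = 0` wherever they are defined
and `1 + cφ² ≠ 0`. -/
theorem statement14
    (c : ℝ) (hc : c = -1 ∨ c = 1)
    (I J : Set ℝ)
    (hIopen : IsOpen I) (hIint : I.OrdConnected)
    (hJopen : IsOpen J) (hJint : J.OrdConnected)
    (f g : ℝ → ℝ)
    (hf : ContDiffOn ℝ (⊤ : ℕ∞) f I) (hg : ContDiffOn ℝ (⊤ : ℕ∞) g J)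
    (φ ψ : ℝ → ℝ → ℝ)
    (hφ : ∀ u v, φ u v = (f u + g v) / (1 - c * f u * g v))
    (hψ : ∀ u v, ψ u v = (1 - c * f u * g v) / (f u + g v)) :
    (∀ u ∈ I, ∀ v ∈ J, 1 - c * f u * g v ≠ 0 → 1 + c * (φ u v) ^ 2 ≠ 0 →
      pd2 (pd1 φ) u v
        - (2 * c * φ u v / (1 + c * (φ u v) ^ 2)) * pd1 φ u v * pd2 φ u v = 0) ∧
    (∀ u ∈ I, ∀ v ∈ J, f u + g v ≠ 0 → 1 + c * (ψ u v) ^ 2 ≠ 0 →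
      pd2 (pd1 ψ) u v
        - (2 * c * ψ u v / (1 + c * (ψ u v) ^ 2)) * pd1 ψ u v * pd2 ψ u v = 0) := by
  have hfd : ∀ u ∈ I, HasDerivAt f (deriv f u) u := fun u hu =>
    ((hf.differentiableOn (by simp)).differentiableAt (hIopen.mem_nhds hu)).hasDerivAt
  have hgd : ∀ v ∈ J, HasDerivAt g (deriv g v) v := fun v hv =>
    ((hg.differentiableOn (by simp)).differentiableAt (hJopen.mem_nhds hv)).hasDerivAt
  constructor
  · intro u hu v hv hden hP
    have hfu := hfd u hu
    have hgv := hgd v hv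
    set d := deriv f u with hd
    set e := deriv g v with he
    -- pd1 φ at any y with nonzero denominator
    have hpd1 : ∀ y : ℝ, 1 - c * f u * g y ≠ 0 →
        pd1 φ u y = d * (1 + c * g y ^ 2) / (1 - c * f u * g y) ^ 2 := by
      intro y hy
      have : (fun x => φ x y) = fun x => (f x + g y) / (1 - c * f x * g y) := by
        funext x; exact hφ x y
      rw [pd1, this]
      exact (phi_fst c (g y) f u d hfu hy).deriv
    -- pd2 φ at v
    have hpd2 : pd2 φ u v = e * (1 + c * f u ^ 2) / (1 - c * f u * g v) ^ 2 := by
      have : (fun y => φ u y) = fun y => (f u + g y) / (1 - c * f u * g y) := by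
        funext y; exact hφ u y
      rw [pd2, this]
      exact (phi_snd c (f u) g v e hgv hden).deriv
    -- mixed derivative
    have hev : (fun y => pd1 φ u y) =ᶠ[nhds v]
        fun y => d * (1 + c * g y ^ 2) / (1 - c * f u * g y) ^ 2 := by
      have hcont : ContinuousAt (fun y => 1 - c * f u * g y) v :=
        continuousAt_const.sub (continuousAt_const.mul hgv.continuousAt)
      filter_upwards [hcont.eventually_ne hden] with y hy using hpd1 y hy
    have hmix : pd2 (pd1 φ) u v = 2 * c * d * e * (f u + g v) / (1 - c * f u * g v) ^ 3 := by
      rw [pd2, hev.deriv_eq]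
      exact (phi_mixed c (f u) d g v e hgv hden).deriv
    rw [hmix, hpd1 v hden, hpd2, hφ u v]
    rw [hφ u v] at hP
    exact alg_phi c (f u) (g v) d e hc hden hP
  · intro u hu v hv hden hP
    have hfu := hfd u hu
    have hgv := hgd v hv
    set d := deriv f u with hd
    set e := deriv g v with he
    have hpd1 : ∀ y : ℝ, f u + g y ≠ 0 →
        pd1 ψ u y = -(d * (1 + c * g y ^ 2)) / (f u + g y) ^ 2 := by
      intro y hy
      have : (fun x => ψ x y) = fun x => (1 - c * f x * g y) / (f x + g y) := by
        funext x; exact hψ x y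
      rw [pd1, this]
      exact (psi_fst c (g y) f u d hfu hy).deriv
    have hpd2 : pd2 ψ u v = -(e * (1 + c * f u ^ 2)) / (f u + g v) ^ 2 := by
      have : (fun y => ψ u y) = fun y => (1 - c * f u * g y) / (f u + g y) := by
        funext y; exact hψ u y
      rw [pd2, this]
      exact (psi_snd c (f u) g v e hgv hden).deriv
    have hev : (fun y => pd1 ψ u y) =ᶠ[nhds v]
        fun y => -(d * (1 + c * g y ^ 2)) / (f u + g y) ^ 2 := by
      have hcont : ContinuousAt (fun y => f u + g y) v :=
        continuousAt_const.add hgv.continuousAt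
      filter_upwards [hcont.eventually_ne hden] with y hy using hpd1 y hy
    have hmix : pd2 (pd1 ψ) u v = 2 * d * e * (1 - c * f u * g v) / (f u + g v) ^ 3 := by
      rw [pd2, hev.deriv_eq]
      exact (psi_mixed c (f u) d g v e hgv hden).deriv
    rw [hmix, hpd1 v hden, hpd2, hψ u v]
    rw [hψ u v] at hP
    exact alg_psi c (f u) (g v) d e hc hden hP
end
end

section
/- Let c ∈ {−1, 1}, let D ⊆ ℝ² be open, and let φ : D → ℝ be smooth with 1 + cφ(u,v)² ≠ 0 for all (u,v) ∈ D, satisfying φ_uv − (2cφ/(1 + cφ²)) φ_u φ_v = 0 on D. Then every point of D has an open rectangular neighborhood I × J ⊆ D on which there exist smooth functions f : I → ℝ and g : J → ℝ such that either φ(u,v) = (f(u) + g(v))/(1 − c f(u) g(v)) for all (u,v) ∈ I × J, or φ(u,v) = (1 − c f(u) g(v))/(f(u) + g(v)) for all (u,v) ∈ I × J. -/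
noncomputable section

lemma aux_const {s : Set ℝ} (hs : Convex ℝ s) (ho : IsOpen s) {h : ℝ → ℝ}
    (hd : ∀ x ∈ s, HasDerivAt h 0 x) {x y : ℝ} (hx : x ∈ s) (hy : y ∈ s) : h x = h y := by
  apply hs.is_const_of_fderivWithin_eq_zero
    (fun z hz => (hd z hz).differentiableAt.differentiableWithinAt) _ hx hy
  intro z hz
  rw [fderivWithin_eq_fderiv (ho.uniqueDiffOn z hz) (hd z hz).differentiableAt,
    (hd z hz).hasFDerivAt.fderiv]
  ext
  simp

lemma aux_ne_one {x : ℝ} (h : |x| < 1) : 1 + x ≠ 0 := by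
  rw [abs_lt] at h; intro h0; linarith

/-- Proposition 6.2, nonlinear d'Alembert formula: for `c = ±1`,
every smooth solution of the harmonic map equation
`φ_uv − (2cφ/(1 + cφ²))φ_uφ_v = 0` is locally of the form `(f + g)/(1 − cfg)` or
`(1 − cfg)/(f + g)` with `f` Lorentz holomorphic and `g` Lorentz anti-holomorphic. -/
theorem statement15
    (c : ℝ) (hc : c = -1 ∨ c = 1)
    (D : Set (ℝ × ℝ)) (hDopen : IsOpen D)
    (φ : ℝ → ℝ → ℝ) (hφ : Smooth2 φ D)
    (hne : ∀ u v, (u, v) ∈ D → 1 + c * (φ u v) ^ 2 ≠ 0)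
    (heq : ∀ u v, (u, v) ∈ D →
      pd2 (pd1 φ) u v
        - (2 * c * φ u v / (1 + c * (φ u v) ^ 2)) * pd1 φ u v * pd2 φ u v = 0) :
    ∀ p ∈ D, ∃ I J : Set ℝ, IsOpen I ∧ IsOpen J ∧ p.1 ∈ I ∧ p.2 ∈ J ∧ I ×ˢ J ⊆ D ∧
      ∃ f g : ℝ → ℝ, ContDiffOn ℝ (⊤ : ℕ∞) f I ∧ ContDiffOn ℝ (⊤ : ℕ∞) g J ∧
        ((∀ u ∈ I, ∀ v ∈ J, 1 - c * f u * g v ≠ 0 ∧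
            φ u v = (f u + g v) / (1 - c * f u * g v)) ∨
         (∀ u ∈ I, ∀ v ∈ J, f u + g v ≠ 0 ∧
            φ u v = (1 - c * f u * g v) / (f u + g v))) := by
  have hc2 : c ^ 2 = 1 := by rcases hc with h | h <;> rw [h] <;> norm_num
  have habsc : |c| = 1 := by rcases hc with h | h <;> rw [h] <;> norm_num
  set F : ℝ × ℝ → ℝ := fun p => φ p.1 p.2 with hFdef
  have hF : ContDiffOn ℝ (⊤ : ℕ∞) F D := hφ
  have hFd : ∀ q ∈ D, DifferentiableAt ℝ F q := fun q hq =>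
    ((hF.contDiffAt (hDopen.mem_nhds hq)).differentiableAt (by simp))
  -- partial derivatives as genuine derivatives
  have hdiff1 : ∀ u v, (u, v) ∈ D → DifferentiableAt ℝ (fun x => φ x v) u := by
    intro u v h
    have hp : DifferentiableAt ℝ (fun x : ℝ => (x, v)) u :=
      differentiableAt_fun_id.prodMk (differentiableAt_const v)
    exact (hFd _ h).comp u hp
  have hdiff2 : ∀ u v, (u, v) ∈ D → DifferentiableAt ℝ (fun y => φ u y) v := by
    intro u v h
    exact (hFd _ h).comp v ((differentiableAt_const u).prodMk differentiableAt_id)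
  have hpd1 : ∀ u v, (u, v) ∈ D → HasDerivAt (fun x => φ x v) (pd1 φ u v) u :=
    fun u v h => (hdiff1 u v h).hasDerivAt
  have hpd2 : ∀ u v, (u, v) ∈ D → HasDerivAt (fun y => φ u y) (pd2 φ u v) v :=
    fun u v h => (hdiff2 u v h).hasDerivAt
  -- the function (u,v) ↦ pd1 φ u v is smooth on D
  set F₁ : ℝ × ℝ → ℝ := fun p => fderiv ℝ F p ((1:ℝ), (0:ℝ)) with hF₁def
  have hF₁ : ContDiffOn ℝ (⊤ : ℕ∞) F₁ D :=
    (hF.fderiv_of_isOpen hDopen (by simp)).clm_apply contDiffOn_const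
  have hF₁eq : ∀ u v, (u, v) ∈ D → pd1 φ u v = F₁ (u, v) := by
    intro u v h
    have hp : HasDerivAt (fun x : ℝ => (x, v)) ((1:ℝ), (0:ℝ)) u :=
      (hasDerivAt_id' u).prodMk (hasDerivAt_const u v)
    have h2 := (hFd (u, v) h).hasFDerivAt.comp_hasDerivAt u hp
    exact HasDerivAt.deriv h2
  have hpd21 : ∀ u v, (u, v) ∈ D → HasDerivAt (fun y => pd1 φ u y) (pd2 (pd1 φ) u v) v := by
    intro u v h
    have hmem : ∀ᶠ y in nhds v, (u, y) ∈ D :=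
      (hDopen.preimage (Continuous.prodMk_right u)).mem_nhds h
    have hev : (fun y => pd1 φ u y) =ᶠ[nhds v] (fun y => F₁ (u, y)) := by
      filter_upwards [hmem] with y hy using hF₁eq u y hy
    have hdF₁ : DifferentiableAt ℝ (fun y => F₁ (u, y)) v :=
      (((hF₁.contDiffAt (hDopen.mem_nhds h)).differentiableAt (by simp)).comp v
        ((differentiableAt_const u).prodMk differentiableAt_id))
    exact (hdF₁.congr_of_eventuallyEq hev).hasDerivAt
  -- now the local construction
  rintro ⟨u₀, v₀⟩ hp
  set k : ℝ := φ u₀ v₀ with hkdef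
  obtain ⟨r₀, hr₀pos, hr₀⟩ := Metric.isOpen_iff.1 hDopen _ hp
  have hFc : ContinuousAt F (u₀, v₀) := (hFd _ hp).continuousAt
  have h1 : F ⁻¹' Metric.ball k 1 ∈ nhds ((u₀, v₀) : ℝ × ℝ) :=
    hFc (Metric.ball_mem_nhds _ one_pos)
  obtain ⟨r₁, hr₁pos, hr₁⟩ := Metric.mem_nhds_iff.1
    (Filter.inter_mem h1 (Metric.ball_mem_nhds _ hr₀pos))
  set M : ℝ := |k| + 1 with hMdef
  have hMpos : 0 < M := by positivity
  have hM1 : 1 ≤ M := by simp [hMdef]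
  have hball : ∀ u v : ℝ, u ∈ Metric.ball u₀ r₁ → v ∈ Metric.ball v₀ r₁ →
      (u, v) ∈ D ∧ |φ u v| < M := by
    intro u v hu hv
    have : ((u, v) : ℝ × ℝ) ∈ Metric.ball ((u₀, v₀) : ℝ × ℝ) r₁ := by
      rw [← ball_prod_same]; exact ⟨hu, hv⟩
    have h2 := hr₁ this
    constructor
    · exact hr₀ h2.2
    · have := h2.1
      simp only [Set.mem_preimage, Metric.mem_ball, Real.dist_eq] at this
      have : |φ u v - k| < 1 := this
      calc |φ u v| ≤ |φ u v - k| + |k| := by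
            have := abs_sub_abs_le_abs_sub (φ u v) k; linarith [abs_abs (φ u v)]
        _ < M := by rw [hMdef]; linarith
  -- definition of f and its denominator
  obtain ⟨d, hddef⟩ : ∃ d : ℝ → ℝ, d = fun u => 1 + c * k * φ u v₀ := ⟨_, rfl⟩
  obtain ⟨f, hfdef⟩ : ∃ f : ℝ → ℝ, f = fun u => (φ u v₀ - k) / d u := ⟨_, rfl⟩
  obtain ⟨g, hgdef⟩ : ∃ g : ℝ → ℝ, g = fun v => φ u₀ v := ⟨_, rfl⟩
  have hv₀r : v₀ ∈ Metric.ball v₀ r₁ := Metric.mem_ball_self hr₁pos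
  have hu₀r : u₀ ∈ Metric.ball u₀ r₁ := Metric.mem_ball_self hr₁pos
  have hd0 : d u₀ ≠ 0 := by
    have h0 := hne u₀ v₀ hp
    rw [hddef]
    intro h1; apply h0; rw [← h1, ← hkdef]; ring
  have hfu₀ : f u₀ = 0 := by rw [hfdef]; simp [hkdef]
  have hcontφ1 : ContinuousAt (fun u => φ u v₀) u₀ := (hdiff1 u₀ v₀ hp).continuousAt
  have hcontd : ContinuousAt d u₀ := by
    rw [hddef]
    exact continuousAt_const.add (continuousAt_const.mul hcontφ1)
  have hcontd' : ContinuousAt (fun u => d u) u₀ := hcontd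
  have hcontf : ContinuousAt f u₀ := by
    rw [hfdef]
    exact ((hcontφ1.sub continuousAt_const).div hcontd hd0)
  have hev2 : ∀ᶠ u in nhds u₀, |f u| < 1 / (2 * M) ∧ d u ≠ 0 := by
    have e1 : ∀ᶠ u in nhds u₀, |f u| < 1 / (2 * M) := by
      have : ContinuousAt (fun u => |f u|) u₀ := hcontf.abs
      have h2 : |f u₀| < 1 / (2 * M) := by rw [hfu₀]; simp; positivity
      exact this.eventually_lt continuousAt_const h2
    have e2 : ∀ᶠ u in nhds u₀, d u ≠ 0 := hcontd.eventually_ne hd0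
    exact e1.and e2
  obtain ⟨r₂, hr₂pos, hr₂⟩ := Metric.eventually_nhds_iff_ball.1 hev2
  set I : Set ℝ := Metric.ball u₀ (min r₁ r₂) with hIdef
  set J : Set ℝ := Metric.ball v₀ r₁ with hJdef
  have hIsub : I ⊆ Metric.ball u₀ r₁ := Metric.ball_subset_ball (min_le_left _ _)
  have hIsub2 : I ⊆ Metric.ball u₀ r₂ := Metric.ball_subset_ball (min_le_right _ _)
  have hu₀I : u₀ ∈ I := Metric.mem_ball_self (lt_min hr₁pos hr₂pos)
  have hv₀J : v₀ ∈ J := hv₀r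
  have hmemD : ∀ u ∈ I, ∀ v ∈ J, (u, v) ∈ D := fun u hu v hv => (hball u v (hIsub hu) hv).1
  have hsub : I ×ˢ J ⊆ D := by
    rintro ⟨u, v⟩ ⟨hu, hv⟩; exact hmemD u hu v hv
  -- key facts on I × J
  have hfsmall : ∀ u ∈ I, |f u| < 1 / (2 * M) := fun u hu => (hr₂ u (hIsub2 hu)).1
  have hdne : ∀ u ∈ I, d u ≠ 0 := fun u hu => (hr₂ u (hIsub2 hu)).2
  have hden2 : ∀ u ∈ I, ∀ v ∈ J, 1 + c * f u * φ u v ≠ 0 := by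
    intro u hu v hv
    apply aux_ne_one
    rw [abs_mul, abs_mul, habsc, one_mul]
    have h2 := hfsmall u hu
    have h3 := (hball u v (hIsub hu) hv).2
    have h4 : |f u| * |φ u v| < (1 / (2 * M)) * M := by
      apply mul_lt_mul' h2.le h3 (abs_nonneg _)
      positivity
    have : (1 / (2 * M)) * M = 1 / 2 := by field_simp
    rw [this] at h4; linarith
  have hfsq : ∀ u ∈ I, 1 + c * (f u) ^ 2 ≠ 0 := by
    intro u hu
    apply aux_ne_one
    rw [abs_mul, habsc, one_mul, abs_pow]
    have h2 := hfsmall u hu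
    have h3 : 1 / (2 * M) ≤ 1 / 2 := by
      apply div_le_div_of_nonneg_left one_pos.le (by norm_num) (by linarith)
    have : |f u| < 1 := by linarith
    calc |f u| ^ 2 ≤ |f u| := by
          nlinarith [abs_nonneg (f u)]
      _ < 1 := this
  -- Step 1: w(u,v) = w(u,v₀)
  have hw : ∀ u ∈ I, ∀ v ∈ J,
      pd1 φ u v / (1 + c * (φ u v) ^ 2) = pd1 φ u v₀ / (1 + c * (φ u v₀) ^ 2) := by
    intro u hu v hv
    apply aux_const (convex_ball v₀ r₁) Metric.isOpen_ball
      (h := fun y => pd1 φ u y / (1 + c * (φ u y) ^ 2)) ?_ hv hv₀r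
    intro y hy
    have hD : (u, y) ∈ D := (hball u y (hIsub hu) hy).1
    have h1 := hpd21 u y hD
    have h2 : HasDerivAt (fun y => 1 + c * (φ u y) ^ 2)
        (c * (2 * φ u y ^ 1 * pd2 φ u y)) y := (((hpd2 u y hD).pow 2).const_mul c).const_add 1
    have h3 := h1.div h2 (hne u y hD)
    have hz : (pd2 (pd1 φ) u y * (1 + c * (φ u y) ^ 2)
        - pd1 φ u y * (c * (2 * φ u y ^ 1 * pd2 φ u y))) / (1 + c * (φ u y) ^ 2) ^ 2 = 0 := by
      rw [div_eq_zero_iff]; left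
      have h4 := heq u y hD
      have h5 := hne u y hD
      have h6 : pd2 (pd1 φ) u y * (1 + c * (φ u y) ^ 2)
          = 2 * c * φ u y * pd1 φ u y * pd2 φ u y := by
        field_simp at h4
        linarith [h4]
      nlinarith [h6]
    rw [hz] at h3
    exact h3
  -- derivative of f
  have hf' : ∀ u ∈ I, HasDerivAt f (pd1 φ u v₀ * (1 + c * k ^ 2) / (d u) ^ 2) u := by
    intro u hu
    have hD : (u, v₀) ∈ D := hmemD u hu v₀ hv₀J
    have hN : HasDerivAt (fun x => φ x v₀ - k) (pd1 φ u v₀) u := (hpd1 u v₀ hD).sub_const k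
    have hDen : HasDerivAt (fun x => 1 + c * k * φ x v₀) (c * k * pd1 φ u v₀) u :=
      ((hpd1 u v₀ hD).const_mul (c * k)).const_add 1
    have hdx : 1 + c * k * φ u v₀ ≠ 0 := by
      have h0 := hdne u hu; rw [hddef] at h0; exact h0
    have h3 := hN.div hDen hdx
    have h4 : (pd1 φ u v₀ * (1 + c * k * φ u v₀) - (φ u v₀ - k) * (c * k * pd1 φ u v₀))
        / (1 + c * k * φ u v₀) ^ 2 = pd1 φ u v₀ * (1 + c * k ^ 2) / (d u) ^ 2 := by
      rw [hddef, div_eq_div_iff (pow_ne_zero _ hdx) (pow_ne_zero _ hdx)]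
      ring
    rw [h4] at h3
    have h5 : f = fun x => (φ x v₀ - k) / (1 + c * k * φ x v₀) := by
      rw [hfdef, hddef]
    rw [h5]
    exact h3
  -- Step 2: Ψ is constant in u
  have hΨ : ∀ u ∈ I, ∀ v ∈ J, (φ u v - f u) / (1 + c * f u * φ u v) = g v := by
    intro u hu v hv
    have key : (φ u v - f u) / (1 + c * f u * φ u v)
        = (φ u₀ v - f u₀) / (1 + c * f u₀ * φ u₀ v) := by
      apply aux_const (convex_ball u₀ (min r₁ r₂)) Metric.isOpen_ball
        (h := fun x => (φ x v - f x) / (1 + c * f x * φ x v)) ?_ hu hu₀I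
      intro x hx
      have hD : (x, v) ∈ D := hmemD x hx v hv
      have hDv₀ : (x, v₀) ∈ D := hmemD x hx v₀ hv₀J
      have hfx := hf' x hx
      have hN : HasDerivAt (fun x => φ x v - f x)
          (pd1 φ x v - pd1 φ x v₀ * (1 + c * k ^ 2) / (d x) ^ 2) x := (hpd1 x v hD).sub hfx
      have hDen : HasDerivAt (fun x => 1 + c * f x * φ x v)
          ((c * (pd1 φ x v₀ * (1 + c * k ^ 2) / (d x) ^ 2)) * φ x v
            + (c * f x) * pd1 φ x v) x :=
        ((hfx.const_mul c).mul (hpd1 x v hD)).const_add 1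
      have h3 := hN.div hDen (hden2 x hx v hv)
      have hcross : pd1 φ x v * (1 + c * (φ x v₀) ^ 2)
          = pd1 φ x v₀ * (1 + c * (φ x v) ^ 2) :=
        (div_eq_div_iff (hne x v hD) (hne x v₀ hDv₀)).1 (hw x hx v hv)
      have hz : ((pd1 φ x v - pd1 φ x v₀ * (1 + c * k ^ 2) / (d x) ^ 2)
            * (1 + c * f x * φ x v)
          - (φ x v - f x) * ((c * (pd1 φ x v₀ * (1 + c * k ^ 2) / (d x) ^ 2)) * φ x v
            + (c * f x) * pd1 φ x v)) / (1 + c * f x * φ x v) ^ 2 = 0 := by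
        rw [div_eq_zero_iff]; left
        have hdx : d x ≠ 0 := hdne x hx
        have hdx' : 1 + c * k * φ x v₀ ≠ 0 := by rw [hddef] at hdx; exact hdx
        have e2 : (1 + c * (f x) ^ 2) * (d x) ^ 2
            = (1 + c * k ^ 2) * (1 + c * (φ x v₀) ^ 2) := by
          simp only [hfdef, hddef]
          have hq : (φ x v₀ - k) / (1 + c * k * φ x v₀) * (1 + c * k * φ x v₀) = φ x v₀ - k :=
            div_mul_cancel₀ _ hdx'
          linear_combination (c * ((φ x v₀ - k) / (1 + c * k * φ x v₀) * (1 + c * k * φ x v₀)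
            + (φ x v₀ - k))) * hq
        have key2 : pd1 φ x v * (1 + c * (f x) ^ 2)
            - (pd1 φ x v₀ * (1 + c * k ^ 2) / (d x) ^ 2) * (1 + c * (φ x v) ^ 2) = 0 := by
          rw [sub_eq_zero, div_mul_eq_mul_div, eq_comm, div_eq_iff (pow_ne_zero 2 hdx)]
          calc pd1 φ x v₀ * (1 + c * k ^ 2) * (1 + c * (φ x v) ^ 2)
              = (1 + c * k ^ 2) * (pd1 φ x v₀ * (1 + c * (φ x v) ^ 2)) := by ring
            _ = (1 + c * k ^ 2) * (pd1 φ x v * (1 + c * (φ x v₀) ^ 2)) := by rw [hcross]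
            _ = pd1 φ x v * ((1 + c * k ^ 2) * (1 + c * (φ x v₀) ^ 2)) := by ring
            _ = pd1 φ x v * ((1 + c * (f x) ^ 2) * (d x) ^ 2) := by rw [e2]
            _ = pd1 φ x v * (1 + c * (f x) ^ 2) * (d x) ^ 2 := by ring
        linear_combination key2
      rw [hz] at h3
      exact h3
    rw [key, hfu₀]
    simp [hgdef]
  -- conclusion
  refine ⟨I, J, Metric.isOpen_ball, Metric.isOpen_ball, hu₀I, hv₀J, hsub, f, g, ?_, ?_, ?_⟩
  · -- f smooth on I
    have hφ1 : ContDiffOn ℝ (⊤ : ℕ∞) (fun u => φ u v₀) I := by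
      have := hF.comp (f := fun u : ℝ => ((u, v₀) : ℝ × ℝ))
        (contDiff_id.prodMk contDiff_const).contDiffOn
        (fun u hu => hmemD u hu v₀ hv₀J)
      exact this
    have hdne' : ∀ u ∈ I, 1 + c * k * φ u v₀ ≠ 0 := by
      intro u hu; have := hdne u hu; rw [hddef] at this; exact this
    rw [hfdef, hddef]
    exact (hφ1.sub contDiffOn_const).div
      (contDiffOn_const.add (contDiffOn_const.mul hφ1)) hdne'
  · -- g smooth on J
    have := hF.comp (f := fun v : ℝ => ((u₀, v) : ℝ × ℝ))
      (contDiff_const.prodMk contDiff_id).contDiffOn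
      (fun v hv => hmemD u₀ hu₀I v hv)
    rw [hgdef]
    exact this
  · left
    intro u hu v hv
    have hden := hden2 u hu v hv
    have hrel : φ u v - f u = g v * (1 + c * f u * φ u v) :=
      (div_eq_iff hden).1 (hΨ u hu v hv)
    have hnz : (1 - c * f u * g v) * (1 + c * f u * φ u v) = 1 + c * (f u) ^ 2 := by
      linear_combination (c * f u) * hrel
    have h1mcfg : 1 - c * f u * g v ≠ 0 := by
      intro h0
      apply hfsq u hu
      rw [← hnz, h0, zero_mul]
    refine ⟨h1mcfg, ?_⟩
    rw [eq_div_iff h1mcfg]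
    linear_combination hrel
end
end
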